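/- arXiv:1204.0815 — 3 statements merged into one kernel-verified Lean document; each statement's English description precedes it below -/
import Mathlib

section
/- Let 0 < a < b and let f be analytic on the annulus A_{a,b} = {z ∈ ℂ : a < |z| < b} with sup_{a<r<b} M₂(f;r) < ∞, i.e. f belongs to the Hardy space H²(A_{a,b}). Then f decomposes as f = g + h on A_{a,b}, where g is analytic on the disc D_b = {|z| < b} with sup_{0<r<b} M₂(g;r) < ∞ (g ∈ H²(D_b)) and h is analytic on {z ∈ ℂ : |z| > a} with sup_{r>a} M₂(h;r) < ∞ (h ∈ H² of the exterior domain ℂ \ closure(D_a)). -/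
open MeasureTheory Complex Filter Set

noncomputable section

/-- The annulus `A_{a,b} = {z : ℂ | a < |z| < b}`. -/
def cAnnulus (a b : ℝ) : Set ℂ := {z : ℂ | a < ‖z‖ ∧ ‖z‖ < b}

/-- The point `r·e^{iφ}` on the circle of radius `r`. -/
def circ (r φ : ℝ) : ℂ := (r : ℂ) * Complex.exp (φ * Complex.I)

/-- The squared mean `M₂(f;r)² = (1/2π) ∫₀^{2π} |f(re^{iφ})|² dφ`. -/
def M2sq (f : ℂ → ℂ) (r : ℝ) : ℝ :=
  (1 / (2 * Real.pi)) * ∫ φ in (0:ℝ)..(2 * Real.pi), ‖f (circ r φ)‖ ^ 2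

/-- Membership in the Hardy space `H²(A_{a,b})` of the annulus: `f` is analytic on the
annulus and `sup_{a<r<b} M₂(f;r) < ∞`. -/
def MemH2 (a b : ℝ) (f : ℂ → ℂ) : Prop :=
  AnalyticOnNhd ℂ f (cAnnulus a b) ∧ ∃ C : ℝ, ∀ r ∈ Set.Ioo a b, M2sq f r ≤ C

section HardyAux

open scoped ENNReal NNReal
open intervalIntegral Metric FormalMultilinearSeries

lemma circ_eq (r φ : ℝ) : circ r φ = circleMap 0 r φ := by
  simp [circ, circleMap]

lemma isOpen_cAnnulus (a b : ℝ) : IsOpen (cAnnulus a b) := by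
  have : cAnnulus a b = (fun z : ℂ => ‖z‖) ⁻¹' (Set.Ioo a b) := rfl
  rw [this]
  exact (isOpen_Ioo).preimage continuous_norm

lemma integral_exp_int (n : ℤ) :
    ∫ θ in (0:ℝ)..(2 * Real.pi), Complex.exp (n * θ * Complex.I) =
      if n = 0 then (2 * Real.pi : ℂ) else 0 := by
  split_ifs with h
  · simp [h]
  · have hc : (n : ℂ) * Complex.I ≠ 0 := by
      simp [Complex.ext_iff, Complex.I_ne_zero, h]
    have key := integral_exp_mul_complex (a := (0:ℝ)) (b := 2 * Real.pi) (c := (n:ℂ) * Complex.I) hc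
    have h1 : (fun θ : ℝ => Complex.exp ((n:ℂ) * θ * Complex.I)) =
        fun θ : ℝ => Complex.exp ((n:ℂ) * Complex.I * θ) := by
      funext θ; ring_nf
    rw [h1, key]
    have : Complex.exp ((n:ℂ) * Complex.I * (2 * Real.pi)) = 1 := by
      have : (n:ℂ) * Complex.I * (2 * Real.pi) = n * (2 * Real.pi * Complex.I) := by ring
      rw [this, Complex.exp_int_mul, Complex.exp_two_pi_mul_I, one_zpow]
    simp [this]

lemma norm_sq_eq_re (w : ℂ) : (‖w‖:ℝ) ^ 2 = (w * (starRingEnd ℂ) w).re := by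
  rw [Complex.mul_conj, Complex.ofReal_re, ← Complex.sq_norm]

lemma parseval_finset {ι : Type*} [DecidableEq ι] (S : Finset ι) (μ : ι → ℤ)
    (hm : Set.InjOn μ S) (γ : ι → ℂ) :
    ∫ θ in (0:ℝ)..(2 * Real.pi),
        ‖∑ n ∈ S, γ n * Complex.exp (μ n * θ * Complex.I)‖ ^ 2 =
      2 * Real.pi * ∑ n ∈ S, ‖γ n‖ ^ 2 := by
  set p : ℝ → ℂ := fun θ => ∑ n ∈ S, γ n * Complex.exp (μ n * θ * Complex.I) with hp
  have hpc : Continuous p :=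
    continuous_finset_sum _ fun n _ =>
      continuous_const.mul (Complex.continuous_exp.comp (by continuity))
  have hJ : (∫ θ in (0:ℝ)..(2 * Real.pi), p θ * (starRingEnd ℂ) (p θ)) =
      (2 * Real.pi : ℂ) * ∑ n ∈ S, (‖γ n‖:ℂ) ^ 2 := by
    have hexp : ∀ θ : ℝ, p θ * (starRingEnd ℂ) (p θ) =
        ∑ m ∈ S, ∑ n ∈ S, (γ m * (starRingEnd ℂ) (γ n)) *
          Complex.exp ((μ m - μ n : ℤ) * θ * Complex.I) := by
      intro θ
      rw [hp]
      simp only [map_sum, map_mul, Finset.sum_mul_sum]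
      refine Finset.sum_congr rfl fun m _ => Finset.sum_congr rfl fun n _ => ?_
      rw [← Complex.exp_conj]
      have h1 : (starRingEnd ℂ) ((μ n:ℂ) * θ * Complex.I) = -((μ n:ℂ) * θ * Complex.I) := by
        simp [Complex.ext_iff]
      rw [h1, show ((μ m - μ n : ℤ):ℂ) * θ * Complex.I =
        (μ m:ℂ) * θ * Complex.I + -((μ n:ℂ) * θ * Complex.I) by push_cast; ring, Complex.exp_add]
      ring
    rw [intervalIntegral.integral_congr (g := fun θ => ∑ m ∈ S, ∑ n ∈ S,
        (γ m * (starRingEnd ℂ) (γ n)) * Complex.exp ((μ m - μ n : ℤ) * θ * Complex.I))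
        (fun θ _ => hexp θ)]
    rw [intervalIntegral.integral_finset_sum]
    · have key : ∀ m ∈ S, (∫ θ in (0:ℝ)..(2 * Real.pi), ∑ n ∈ S,
          (γ m * (starRingEnd ℂ) (γ n)) * Complex.exp ((μ m - μ n : ℤ) * θ * Complex.I)) =
          γ m * (starRingEnd ℂ) (γ m) * (2 * Real.pi) := by
        intro m hm'
        rw [intervalIntegral.integral_finset_sum]
        · have h2 : ∀ n ∈ S, (∫ θ in (0:ℝ)..(2 * Real.pi),
              (γ m * (starRingEnd ℂ) (γ n)) * Complex.exp ((μ m - μ n : ℤ) * θ * Complex.I)) =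
              if n = m then γ m * (starRingEnd ℂ) (γ m) * (2 * Real.pi) else 0 := by
            intro n hn
            rw [intervalIntegral.integral_const_mul, integral_exp_int]
            split_ifs with h1 h2 h2
            · subst h2; ring
            · exact absurd (hm hn hm' (by omega)) h2
            · subst h2; simp at h1
            · ring
          rw [Finset.sum_congr rfl h2, Finset.sum_ite_eq' S m
            (fun _ => γ m * (starRingEnd ℂ) (γ m) * (2 * Real.pi))]
          simp [hm']
        · intro n _
          exact (Continuous.intervalIntegrable
            (continuous_const.mul (Complex.continuous_exp.comp (by continuity))) _ _)
      rw [Finset.sum_congr rfl key, Finset.mul_sum]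
      refine Finset.sum_congr rfl fun m _ => ?_
      rw [Complex.mul_conj, Complex.normSq_eq_norm_sq]
      push_cast
      ring
    · intro m _
      refine Continuous.intervalIntegrable ?_ _ _
      exact continuous_finset_sum _ fun n _ =>
        continuous_const.mul (Complex.continuous_exp.comp (by continuity))
  have hint : IntervalIntegrable (fun θ => p θ * (starRingEnd ℂ) (p θ)) volume 0 (2 * Real.pi) :=
    (hpc.mul (Complex.continuous_conj.comp hpc)).intervalIntegrable _ _
  have hre := Complex.reCLM.intervalIntegral_comp_comm hint
  simp only [Complex.reCLM_apply] at hre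
  calc ∫ θ in (0:ℝ)..(2 * Real.pi), ‖p θ‖ ^ 2
      = ∫ θ in (0:ℝ)..(2 * Real.pi), (p θ * (starRingEnd ℂ) (p θ)).re :=
        intervalIntegral.integral_congr fun θ _ => norm_sq_eq_re (p θ)
    _ = (∫ θ in (0:ℝ)..(2 * Real.pi), p θ * (starRingEnd ℂ) (p θ)).re := hre
    _ = 2 * Real.pi * ∑ n ∈ S, ‖γ n‖ ^ 2 := by
        rw [hJ]
        have : ((2 * Real.pi : ℝ) : ℂ) * ((∑ n ∈ S, ‖γ n‖ ^ 2 : ℝ) : ℂ) =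
            (2 * Real.pi : ℂ) * ∑ n ∈ S, (‖γ n‖:ℂ) ^ 2 := by push_cast; ring
        rw [← this, ← Complex.ofReal_mul, Complex.ofReal_re]

/-- Fourier coefficient of `f` on the circle of radius `ρ`. -/
def fCoef (f : ℂ → ℂ) (ρ : ℝ) (n : ℤ) : ℂ :=
  (1 / (2 * Real.pi) : ℂ) * ∫ θ in (0:ℝ)..(2 * Real.pi),
    f (circleMap 0 ρ θ) * Complex.exp (-(n:ℂ) * θ * Complex.I)

/-- Laurent coefficient of `f` via the circle integral of radius `ρ`. -/
def lCoef (f : ℂ → ℂ) (ρ : ℝ) (n : ℤ) : ℂ :=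
  (2 * Real.pi * Complex.I)⁻¹ • ∮ w in C(0, ρ), w ^ (-n-1 : ℤ) • f w

lemma circleMap_zpow (ρ : ℝ) (θ : ℝ) (m : ℤ) :
    (circleMap 0 ρ θ) ^ m = (ρ:ℂ) ^ m * Complex.exp (m * θ * Complex.I) := by
  rw [show circleMap 0 ρ θ = (ρ:ℂ) * Complex.exp (θ * Complex.I) by simp [circleMap]]
  rw [mul_zpow, ← Complex.exp_int_mul]
  ring_nf

lemma fCoef_eq_lCoef (f : ℂ → ℂ) {ρ : ℝ} (hρ : 0 < ρ) (n : ℤ) :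
    fCoef f ρ n = lCoef f ρ n * (ρ:ℂ) ^ (n:ℤ) := by
  have hρ' : (ρ:ℂ) ≠ 0 := Complex.ofReal_ne_zero.mpr hρ.ne'
  rw [lCoef, circleIntegral]
  have hI : ∀ θ ∈ Set.uIcc (0:ℝ) (2 * Real.pi),
      deriv (circleMap 0 ρ) θ • ((circleMap 0 ρ θ) ^ (-n-1 : ℤ) • f (circleMap 0 ρ θ)) =
      (Complex.I * (ρ:ℂ) ^ (-n : ℤ)) *
        (f (circleMap 0 ρ θ) * Complex.exp (-(n:ℂ) * θ * Complex.I)) := by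
    intro θ _
    rw [deriv_circleMap, smul_eq_mul, smul_eq_mul, circleMap_zpow]
    rw [show circleMap 0 ρ θ = (ρ:ℂ) * Complex.exp (θ * Complex.I) by simp [circleMap]]
    rw [show (ρ:ℂ) ^ (-n : ℤ) = (ρ:ℂ) ^ (-n-1 : ℤ) * ρ by
      rw [← zpow_add_one₀ hρ']; ring_nf]
    rw [show ((-n-1 : ℤ):ℂ) * θ * Complex.I =
      (-(n:ℂ)) * θ * Complex.I + (-(θ * Complex.I)) by push_cast; ring]
    rw [Complex.exp_add]
    have hexp : Complex.exp (θ * Complex.I) * Complex.exp (-(θ * Complex.I)) = 1 := by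
      rw [← Complex.exp_add]; simp
    linear_combination ((ρ:ℂ) * Complex.I * (ρ:ℂ) ^ (-n-1:ℤ) *
      Complex.exp (-(n:ℂ) * θ * Complex.I) * f ((ρ:ℂ) * Complex.exp (θ * Complex.I))) * hexp
  rw [intervalIntegral.integral_congr hI, intervalIntegral.integral_const_mul]
  rw [fCoef, smul_eq_mul]
  simp only [neg_mul]
  set J := ∫ θ in (0:ℝ)..(2 * Real.pi),
    f (circleMap 0 ρ θ) * Complex.exp (-((n:ℂ) * θ * Complex.I)) with hJdef
  have hz : (ρ:ℂ) ^ (-n:ℤ) * (ρ:ℂ) ^ (n:ℤ) = 1 := by rw [← zpow_add₀ hρ']; simp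
  have h1 : Complex.I * (2 * (Real.pi:ℂ) * Complex.I)⁻¹ = (2 * (Real.pi:ℂ))⁻¹ := by
    rw [mul_inv, mul_comm ((2 * (Real.pi:ℂ))⁻¹) _, ← mul_assoc,
      mul_inv_cancel₀ Complex.I_ne_zero, one_mul]
  rw [eq_comm]
  calc (2 * (Real.pi:ℂ) * Complex.I)⁻¹ * (Complex.I * (ρ:ℂ) ^ (-n:ℤ) * J) * (ρ:ℂ) ^ (n:ℤ)
      = (Complex.I * (2 * (Real.pi:ℂ) * Complex.I)⁻¹) * (((ρ:ℂ) ^ (-n:ℤ) * (ρ:ℂ) ^ (n:ℤ)) * J) := by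
        ring
    _ = 1 / (2 * (Real.pi:ℂ)) * J := by rw [hz, h1, one_div]; ring

lemma lCoef_const {f : ℂ → ℂ} {a b r R : ℝ} (ha : 0 < a) (h1 : a < r) (h2 : r ≤ R)
    (h3 : R < b) (hf : AnalyticOnNhd ℂ f (cAnnulus a b)) (n : ℤ) :
    lCoef f R n = lCoef f r n := by
  have hsub : closedBall (0:ℂ) R \ ball 0 r ⊆ cAnnulus a b := by
    rintro z ⟨hz1, hz2⟩
    simp only [mem_closedBall, Complex.dist_eq, sub_zero] at hz1
    simp only [mem_ball, Complex.dist_eq, sub_zero, not_lt] at hz2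
    exact ⟨h1.trans_le hz2, lt_of_le_of_lt hz1 h3⟩
  have hdiff : ∀ z ∈ cAnnulus a b, DifferentiableAt ℂ (fun w => w ^ (-n-1 : ℤ) • f w) z := by
    intro z hz
    have hz0 : z ≠ 0 := by
      intro h; rw [h] at hz; simp [cAnnulus] at hz; linarith [hz.1]
    exact ((differentiableAt_zpow.mpr (Or.inl hz0)).smul (hf z hz).differentiableAt)
  have := circleIntegral_eq_of_differentiable_on_annulus_off_countable
    (c := 0) (f := fun w => w ^ (-n-1 : ℤ) • f w) (lt_trans ha h1) h2
    Set.countable_empty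
    (fun z hz => (hdiff z (hsub hz)).continuousAt.continuousWithinAt)
    (fun z hz => hdiff z (hsub ⟨ball_subset_closedBall hz.1.1,
      fun h => hz.1.2 (ball_subset_closedBall h)⟩))
  rw [lCoef, lCoef, this]

lemma norm_sub_sq_complex (u v : ℂ) :
    ‖u - v‖ ^ 2 = ‖u‖ ^ 2 - 2 * (u * (starRingEnd ℂ) v).re + ‖v‖ ^ 2 := by
  rw [norm_sq_eq_re, norm_sq_eq_re u, norm_sq_eq_re v]
  have h1 : (u - v) * (starRingEnd ℂ) (u - v) =
      u * (starRingEnd ℂ) u - (u * (starRingEnd ℂ) v + v * (starRingEnd ℂ) u) +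
        v * (starRingEnd ℂ) v := by
    rw [map_sub]; ring
  rw [h1]
  have h2 : v * (starRingEnd ℂ) u = (starRingEnd ℂ) (u * (starRingEnd ℂ) v) := by
    rw [map_mul, Complex.conj_conj]; ring
  simp [Complex.sub_re, Complex.add_re, h2, Complex.conj_re]
  ring

lemma bessel (f : ℂ → ℂ) (ρ : ℝ) (hc : Continuous (fun θ : ℝ => f (circleMap 0 ρ θ)))
    (S : Finset ℤ) :
    2 * Real.pi * ∑ n ∈ S, ‖fCoef f ρ n‖ ^ 2 ≤
      ∫ θ in (0:ℝ)..(2 * Real.pi), ‖f (circleMap 0 ρ θ)‖ ^ 2 := by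
  set F : ℝ → ℂ := fun θ => f (circleMap 0 ρ θ) with hF
  set a : ℤ → ℂ := fun n => fCoef f ρ n with ha
  set p : ℝ → ℂ := fun θ => ∑ n ∈ S, a n * Complex.exp (n * θ * Complex.I) with hp
  have hpc : Continuous p :=
    continuous_finset_sum _ fun n _ =>
      continuous_const.mul (Complex.continuous_exp.comp (by continuity))
  have hcross : (∫ θ in (0:ℝ)..(2 * Real.pi), (F θ * (starRingEnd ℂ) (p θ)).re) =
      2 * Real.pi * ∑ n ∈ S, ‖a n‖ ^ 2 := by
    have hptw : ∀ θ : ℝ, F θ * (starRingEnd ℂ) (p θ) =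
        ∑ n ∈ S, (starRingEnd ℂ) (a n) *
          (F θ * Complex.exp (-(n:ℂ) * θ * Complex.I)) := by
      intro θ
      rw [hp]
      simp only [map_sum, map_mul, Finset.mul_sum]
      refine Finset.sum_congr rfl fun n _ => ?_
      rw [← Complex.exp_conj]
      have h1 : (starRingEnd ℂ) ((n:ℂ) * θ * Complex.I) = -(n:ℂ) * θ * Complex.I := by
        simp [Complex.ext_iff]
      rw [h1]; ring
    have hint : ∀ n : ℤ, (∫ θ in (0:ℝ)..(2 * Real.pi),
        F θ * Complex.exp (-(n:ℂ) * θ * Complex.I)) = 2 * Real.pi * a n := by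
      intro n
      simp only [ha]
      rw [fCoef, hF]
      have h2π : (2 * (Real.pi:ℂ)) ≠ 0 := by
        simp [Real.pi_ne_zero]
      rw [show (2 * (Real.pi:ℂ)) * ((1 / (2 * Real.pi) : ℂ) * ∫ θ in (0:ℝ)..(2 * Real.pi),
        f (circleMap 0 ρ θ) * Complex.exp (-(n:ℂ) * θ * Complex.I)) =
        ((2 * (Real.pi:ℂ)) / (2 * (Real.pi:ℂ))) * ∫ θ in (0:ℝ)..(2 * Real.pi),
        f (circleMap 0 ρ θ) * Complex.exp (-(n:ℂ) * θ * Complex.I) by ring, div_self h2π, one_mul]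
    have hintg : IntervalIntegrable (fun θ => F θ * (starRingEnd ℂ) (p θ)) volume 0 (2*Real.pi) :=
      (hc.mul (Complex.continuous_conj.comp hpc)).intervalIntegrable _ _
    have hre := Complex.reCLM.intervalIntegral_comp_comm hintg
    simp only [Complex.reCLM_apply] at hre
    rw [hre]
    rw [intervalIntegral.integral_congr (fun θ _ => hptw θ)]
    rw [intervalIntegral.integral_finset_sum (fun n _ =>
      Continuous.intervalIntegrable (by fun_prop) _ _)]
    have : ∀ n ∈ S, (∫ θ in (0:ℝ)..(2 * Real.pi),
        (starRingEnd ℂ) (a n) * (F θ * Complex.exp (-(n:ℂ) * θ * Complex.I))) =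
        (starRingEnd ℂ) (a n) * (2 * Real.pi * a n) := by
      intro n _
      rw [intervalIntegral.integral_const_mul, hint n]
    rw [Finset.sum_congr rfl this]
    have : ∀ n ∈ S, ((starRingEnd ℂ) (a n) * (2 * Real.pi * a n)) =
        (((2 * Real.pi * ‖a n‖ ^ 2 : ℝ)):ℂ) := by
      intro n _
      rw [show (starRingEnd ℂ) (a n) * (2 * Real.pi * a n) =
        2 * (Real.pi:ℂ) * (a n * (starRingEnd ℂ) (a n)) by ring]
      rw [Complex.mul_conj, Complex.normSq_eq_norm_sq]
      push_cast; ring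
    rw [Finset.sum_congr rfl this, ← Complex.ofReal_sum]
    rw [Complex.ofReal_re, Finset.mul_sum]
  have hexp : ∀ θ : ℝ, ‖F θ - p θ‖ ^ 2 =
      ‖F θ‖ ^ 2 - 2 * (F θ * (starRingEnd ℂ) (p θ)).re + ‖p θ‖ ^ 2 :=
    fun θ => norm_sub_sq_complex _ _
  have hi1 : IntervalIntegrable (fun θ => ‖F θ‖ ^ 2) volume 0 (2*Real.pi) :=
    ((hc.norm.pow 2)).intervalIntegrable _ _
  have hi2 : IntervalIntegrable (fun θ => (F θ * (starRingEnd ℂ) (p θ)).re) volume 0 (2*Real.pi) :=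
    ((Complex.continuous_re.comp (hc.mul (Complex.continuous_conj.comp hpc)))).intervalIntegrable _ _
  have hi3 : IntervalIntegrable (fun θ => ‖p θ‖ ^ 2) volume 0 (2*Real.pi) :=
    ((hpc.norm.pow 2)).intervalIntegrable _ _
  have hpos : 0 ≤ ∫ θ in (0:ℝ)..(2 * Real.pi), ‖F θ - p θ‖ ^ 2 := by
    apply intervalIntegral.integral_nonneg (by positivity : (0:ℝ) ≤ 2 * Real.pi)
    intro θ _; positivity
  have hsplit : (∫ θ in (0:ℝ)..(2 * Real.pi), ‖F θ - p θ‖ ^ 2) =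
      (∫ θ in (0:ℝ)..(2 * Real.pi), ‖F θ‖ ^ 2)
      - 2 * (∫ θ in (0:ℝ)..(2 * Real.pi), (F θ * (starRingEnd ℂ) (p θ)).re)
      + (∫ θ in (0:ℝ)..(2 * Real.pi), ‖p θ‖ ^ 2) := by
    rw [intervalIntegral.integral_congr (fun θ _ => hexp θ)]
    rw [intervalIntegral.integral_add (IntervalIntegrable.sub hi1 (hi2.const_mul 2)) hi3,
      intervalIntegral.integral_sub hi1 (hi2.const_mul 2),
      intervalIntegral.integral_const_mul]
  have hP : (∫ θ in (0:ℝ)..(2 * Real.pi), ‖p θ‖ ^ 2) = 2 * Real.pi * ∑ n ∈ S, ‖a n‖ ^ 2 :=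
    parseval_finset S _root_.id (fun x _ y _ h => h) a
  rw [hsplit, hcross, hP] at hpos
  have : ∀ n ∈ S, ‖fCoef f ρ n‖ ^ 2 = ‖a n‖ ^ 2 := fun n _ => rfl
  rw [Finset.sum_congr rfl this]
  linarith

lemma circ_zpow {r : ℝ} (hr : 0 < r) (φ : ℝ) (k : ℤ) :
    (circ r φ) ^ k = ((r:ℝ) ^ k : ℝ) * Complex.exp (k * φ * Complex.I) := by
  rw [circ, mul_zpow, ← Complex.exp_int_mul]
  push_cast [Complex.ofReal_zpow]
  ring_nf

lemma abs_circ {r : ℝ} (hr : 0 ≤ r) (φ : ℝ) : ‖circ r φ‖ = r := by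
  rw [circ, norm_mul, Complex.norm_real, Real.norm_eq_abs, _root_.abs_of_nonneg hr]
  simp [Complex.norm_exp]

/-- Main generic bound: if `G∘circ r` is a sum of modes with square-summable bound `C₀`,
then `M2sq G r ≤ C₀`. -/
lemma M2sq_le_of_modes {G : ℂ → ℂ} {r : ℝ} (hr : 0 < r) (γ : ℕ → ℂ) (μ : ℕ → ℤ)
    (hμ : Function.Injective μ) {C₀ : ℝ}
    (hGc : Continuous (fun φ : ℝ => G (circ r φ)))
    (hsum : Summable (fun n => ‖γ n‖ * (r:ℝ) ^ (μ n)))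
    (hG : ∀ φ : ℝ, HasSum (fun n => γ n * (circ r φ) ^ (μ n)) (G (circ r φ)))
    (hC : ∀ N : ℕ, ∑ n ∈ Finset.range N, (‖γ n‖ * (r:ℝ) ^ (μ n)) ^ 2 ≤ C₀) :
    M2sq G r ≤ C₀ := by
  set u : ℕ → ℝ := fun n => ‖γ n‖ * (r:ℝ) ^ (μ n) with hu
  have hu0 : ∀ n, 0 ≤ u n := fun n => by
    have : (0:ℝ) < (r:ℝ) ^ (μ n) := zpow_pos hr _
    positivity
  set B : ℝ := ∑' n, u n with hB
  set t : ℕ → ℝ := fun N => ∑' k, u (k + N) with ht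
  have hnorm : ∀ (φ : ℝ) (n : ℕ), ‖γ n * (circ r φ) ^ (μ n)‖ = u n := by
    intro φ n
    rw [norm_mul, norm_zpow]
    congr 1
    rw [abs_circ hr.le]
  have htnn : ∀ N, 0 ≤ t N := fun N => tsum_nonneg (fun k => hu0 _)
  have htail : ∀ (φ : ℝ) (N : ℕ),
      ‖G (circ r φ) - ∑ n ∈ Finset.range N, γ n * (circ r φ) ^ (μ n)‖ ≤ t N := by
    intro φ N
    have hv : Summable (fun n => γ n * (circ r φ) ^ (μ n)) :=
      Summable.of_norm (by simpa only [hnorm φ] using hsum)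
    have hsplit := Summable.sum_add_tsum_nat_add (f := fun n => γ n * (circ r φ) ^ (μ n)) N hv
    have : G (circ r φ) - ∑ n ∈ Finset.range N, γ n * (circ r φ) ^ (μ n) =
        ∑' k, γ (k + N) * (circ r φ) ^ (μ (k + N)) := by
      rw [← (hG φ).tsum_eq, ← hsplit]; ring
    rw [this]
    refine (norm_tsum_le_tsum_norm ?_).trans_eq ?_
    · have hs : Summable (fun i => u (i + N)) := hsum.comp_injective (add_left_injective N)
      exact (by simpa only [hnorm φ] using hs)
    · rw [ht]
      exact tsum_congr fun k => hnorm φ _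
  have hPS : ∀ N : ℕ, ∫ φ in (0:ℝ)..(2 * Real.pi),
      ‖∑ n ∈ Finset.range N, γ n * (circ r φ) ^ (μ n)‖ ^ 2 =
      2 * Real.pi * ∑ n ∈ Finset.range N, u n ^ 2 := by
    intro N
    have hre : ∀ φ : ℝ, (∑ n ∈ Finset.range N, γ n * (circ r φ) ^ (μ n)) =
        ∑ n ∈ Finset.range N, (γ n * ((r:ℝ) ^ (μ n) : ℝ)) * Complex.exp (μ n * φ * Complex.I) := by
      intro φ
      refine Finset.sum_congr rfl fun n _ => ?_
      rw [circ_zpow hr]; ring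
    calc ∫ φ in (0:ℝ)..(2 * Real.pi), ‖∑ n ∈ Finset.range N, γ n * (circ r φ) ^ (μ n)‖ ^ 2
        = ∫ φ in (0:ℝ)..(2 * Real.pi),
            ‖∑ n ∈ Finset.range N, (γ n * ((r:ℝ) ^ (μ n) : ℝ)) * Complex.exp (μ n * φ * Complex.I)‖ ^ 2 := by
          exact intervalIntegral.integral_congr fun φ _ => by rw [hre φ]
      _ = 2 * Real.pi * ∑ n ∈ Finset.range N, ‖γ n * ((r:ℝ) ^ (μ n) : ℝ)‖ ^ 2 :=
          parseval_finset _ μ (hμ.injOn) _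
      _ = 2 * Real.pi * ∑ n ∈ Finset.range N, u n ^ 2 := by
          congr 1
          refine Finset.sum_congr rfl fun n _ => ?_
          rw [norm_mul, hu]
          congr 2
          simp [_root_.abs_of_nonneg hr.le]
  have hSB : ∀ (φ : ℝ) (N : ℕ), ‖∑ n ∈ Finset.range N, γ n * (circ r φ) ^ (μ n)‖ ≤ B := by
    intro φ N
    refine (norm_sum_le _ _).trans ?_
    rw [hB]
    refine (Finset.sum_le_sum fun n _ => le_of_eq (hnorm φ n)).trans ?_
    exact Summable.sum_le_tsum _ (fun n _ => hu0 n) hsum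
  have key : ∀ N : ℕ, M2sq G r ≤ C₀ + (2 * B * t N + t N ^ 2) := by
    intro N
    set P : ℝ → ℂ := fun φ => ∑ n ∈ Finset.range N, γ n * (circ r φ) ^ (μ n) with hP
    have hPc : Continuous P := by
      refine continuous_finset_sum _ fun n _ => continuous_const.mul ?_
      have : Continuous (fun φ : ℝ => circ r φ) := by
        exact continuous_const.mul (Complex.continuous_exp.comp (by continuity))
      exact this.zpow₀ _ (fun φ => Or.inl (by
        intro h
        have := abs_circ hr.le φ
        rw [h] at this
        simp at this
        linarith))
    have hptw : ∀ φ : ℝ, ‖G (circ r φ)‖ ^ 2 ≤ ‖P φ‖ ^ 2 + (2 * B * t N + t N ^ 2) := by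
      intro φ
      have h1 : ‖G (circ r φ)‖ ≤ ‖P φ‖ + t N := by
        have := htail φ N
        calc ‖G (circ r φ)‖ = ‖P φ + (G (circ r φ) - P φ)‖ := by ring_nf
          _ ≤ ‖P φ‖ + ‖G (circ r φ) - P φ‖ := norm_add_le _ _
          _ ≤ ‖P φ‖ + t N := by linarith
      have h2 : ‖P φ‖ ≤ B := hSB φ N
      nlinarith [norm_nonneg (G (circ r φ)), norm_nonneg (P φ), htnn N]
    have hint1 : IntervalIntegrable (fun φ => ‖G (circ r φ)‖ ^ 2) volume 0 (2 * Real.pi) :=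
      ((hGc.norm.pow 2)).intervalIntegrable _ _
    have hint2 : IntervalIntegrable (fun φ => ‖P φ‖ ^ 2 + (2 * B * t N + t N ^ 2)) volume 0 (2 * Real.pi) :=
      (((hPc.norm.pow 2)).add continuous_const).intervalIntegrable _ _
    have hmono := intervalIntegral.integral_mono_on (by positivity : (0:ℝ) ≤ 2 * Real.pi)
      hint1 hint2 (fun φ _ => hptw φ)
    rw [intervalIntegral.integral_add (f := fun φ => ‖P φ‖ ^ 2) (((hPc.norm.pow 2)).intervalIntegrable _ _)
      (intervalIntegrable_const), hPS N, intervalIntegral.integral_const] at hmono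
    have hpi : 0 < 2 * Real.pi := by positivity
    rw [M2sq]
    rw [div_mul_eq_mul_div, one_mul, div_le_iff₀ hpi]
    calc (∫ φ in (0:ℝ)..(2 * Real.pi), ‖G (circ r φ)‖ ^ 2)
        ≤ 2 * Real.pi * ∑ n ∈ Finset.range N, u n ^ 2 + (2 * Real.pi - 0) • (2 * B * t N + t N ^ 2) := hmono
      _ ≤ 2 * Real.pi * C₀ + (2 * Real.pi) * (2 * B * t N + t N ^ 2) := by
          have := hC N
          simp only [sub_zero, smul_eq_mul]
          nlinarith
      _ = (C₀ + (2 * B * t N + t N ^ 2)) * (2 * Real.pi) := by ring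
  have htlim : Tendsto t atTop (nhds 0) := tendsto_sum_nat_add u
  have hlim : Tendsto (fun N => C₀ + (2 * B * t N + t N ^ 2)) atTop (nhds C₀) := by
    have : Tendsto (fun N => 2 * B * t N + t N ^ 2) atTop (nhds 0) := by
      have h1 : Tendsto (fun N => 2 * B * t N) atTop (nhds 0) := by
        simpa using htlim.const_mul (2 * B)
      have h2 : Tendsto (fun N => t N ^ 2) atTop (nhds 0) := by
        simpa using htlim.pow 2
      simpa using h1.add h2
    simpa using tendsto_const_nhds.add this
  exact ge_of_tendsto hlim (Filter.Eventually.of_forall key)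

lemma radius_ge {c : ℕ → ℂ} {b K : ℝ}
    (hbd : ∀ r : ℝ, 0 ≤ r → r < b → ∀ n : ℕ, ‖c n‖ * r ^ n ≤ K) :
    ENNReal.ofReal b ≤ (ofScalars ℂ c).radius := by
  refine ENNReal.le_of_forall_nnreal_lt fun r hr => ?_
  refine FormalMultilinearSeries.le_radius_of_bound _ K fun n => ?_
  have hrb : (r:ℝ) < b := by
    have h1 : (r : ℝ≥0∞) < ENNReal.ofReal b := hr
    rw [ENNReal.lt_ofReal_iff_toReal_lt (by simp)] at h1
    simpa using h1
  have := hbd r r.coe_nonneg hrb n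
  rw [ofScalars_norm]
  exact this

lemma analyticOnNhd_ofScalars {c : ℕ → ℂ} {b : ℝ} (hb : 0 < b)
    (h : ENNReal.ofReal b ≤ (ofScalars ℂ c).radius) :
    AnalyticOnNhd ℂ (ofScalars ℂ c).sum {z : ℂ | ‖z‖ < b} := by
  have h0 : 0 < (ofScalars ℂ c).radius := lt_of_lt_of_le (by simp [hb]) h
  have hball := (ofScalars ℂ c).hasFPowerSeriesOnBall h0
  have := hball.analyticOnNhd
  refine this.mono fun z hz => ?_
  simp only [EMetric.mem_ball]
  calc edist z 0 = (‖z‖₊ : ℝ≥0∞) := by rw [edist_zero_right]; rfl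
    _ < ENNReal.ofReal b := by
        have := (ENNReal.ofReal_lt_ofReal_iff hb).mpr hz
        rw [ofReal_norm] at this
        exact this
    _ ≤ _ := h

lemma mem_emetric_ball_of_abs_lt {z : ℂ} {b : ℝ} (hb : 0 < b) (hz : ‖z‖ < b)
    {ρ : ℝ≥0∞} (h : ENNReal.ofReal b ≤ ρ) : z ∈ Metric.eball (0:ℂ) ρ := by
  simp only [EMetric.mem_ball]
  calc edist z 0 = (‖z‖₊ : ℝ≥0∞) := by rw [edist_zero_right]; rfl
    _ < ENNReal.ofReal b := by
        have := (ENNReal.ofReal_lt_ofReal_iff hb).mpr hz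
        rw [ofReal_norm] at this
        exact this
    _ ≤ ρ := h

/-- Two-circle Cauchy integral formula on an annulus. -/
lemma two_circle {f : ℂ → ℂ} {a b r R : ℝ} (ha : 0 < a) (har : a < r) (hRb : R < b)
    (hf : AnalyticOnNhd ℂ f (cAnnulus a b)) {z : ℂ}
    (hzr : r < ‖z‖) (hzR : ‖z‖ < R) :
    (2 * Real.pi * Complex.I : ℂ) * f z =
      (∮ w in C(0, R), (w - z)⁻¹ • f w) - ∮ w in C(0, r), (w - z)⁻¹ • f w := by
  have h0r : 0 < r := lt_trans ha har
  have hrR : r ≤ R := le_of_lt (lt_trans hzr hzR)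
  have hz : z ∈ cAnnulus a b := ⟨har.trans hzr, hzR.trans hRb⟩
  have hcont : ContinuousOn f (cAnnulus a b) := fun w hw =>
    (hf w hw).continuousAt.continuousWithinAt
  have hsubann : closedBall (0:ℂ) R \ ball 0 r ⊆ cAnnulus a b := by
    rintro w ⟨hw1, hw2⟩
    simp only [mem_closedBall, Complex.dist_eq, sub_zero] at hw1
    simp only [mem_ball, Complex.dist_eq, sub_zero, not_lt] at hw2
    exact ⟨har.trans_le hw2, lt_of_le_of_lt hw1 hRb⟩
  have hnbhd : closedBall (0:ℂ) R \ ball 0 r ∈ nhds z := by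
    rw [_root_.mem_nhds_iff]
    refine ⟨{w : ℂ | r < ‖w‖ ∧ ‖w‖ < R}, ?_, ?_, ⟨hzr, hzR⟩⟩
    · rintro w ⟨hw1, hw2⟩
      refine ⟨?_, ?_⟩
      · simp only [mem_closedBall, Complex.dist_eq, sub_zero]; exact hw2.le
      · simp only [mem_ball, Complex.dist_eq, sub_zero, not_lt]; exact hw1.le
    · exact isOpen_cAnnulus r R
  have hdz : DifferentiableAt ℂ f z := (hf z hz).differentiableAt
  have hcd : ContinuousOn (dslope f z) (closedBall (0:ℂ) R \ ball 0 r) :=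
    (continuousOn_dslope hnbhd).mpr ⟨hcont.mono hsubann, hdz⟩
  have hdd : ∀ w ∈ (ball (0:ℂ) R \ closedBall 0 r) \ {z},
      DifferentiableAt ℂ (dslope f z) w := by
    rintro w ⟨hw1, hw2⟩
    rw [differentiableAt_dslope_of_ne (by simpa using hw2)]
    exact (hf w (hsubann ⟨ball_subset_closedBall hw1.1,
      fun h => hw1.2 (ball_subset_closedBall h)⟩)).differentiableAt
  have heq := circleIntegral_eq_of_differentiable_on_annulus_off_countable h0r hrR
    (Set.countable_singleton z) hcd hdd
  have hzsR : ∀ w ∈ sphere (0:ℂ) R, w ≠ z := by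
    intro w hw
    simp only [mem_sphere_iff_norm, sub_zero] at hw
    intro h; rw [h] at hw; exact (ne_of_gt hzR) hw.symm
  have hzsr : ∀ w ∈ sphere (0:ℂ) r, w ≠ z := by
    intro w hw
    simp only [mem_sphere_iff_norm, sub_zero] at hw
    intro h; rw [h] at hw; exact (ne_of_lt hzr) hw.symm
  have hsphR : sphere (0:ℂ) R ⊆ cAnnulus a b := by
    intro w hw
    simp only [mem_sphere_iff_norm, sub_zero] at hw
    constructor <;> rw [hw]
    · exact lt_trans har (lt_trans hzr hzR)
    · exact hRb
  have hsphr : sphere (0:ℂ) r ⊆ cAnnulus a b := by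
    intro w hw
    simp only [mem_sphere_iff_norm, sub_zero] at hw
    constructor <;> rw [hw]
    · exact har
    · exact lt_trans (lt_trans hzr hzR) hRb
  have hexp : ∀ (ρ : ℝ), 0 < ρ → (∀ w ∈ sphere (0:ℂ) ρ, w ≠ z) →
      sphere (0:ℂ) ρ ⊆ cAnnulus a b →
      (∮ w in C(0, ρ), dslope f z w) =
        (∮ w in C(0, ρ), (w - z)⁻¹ • f w) - (∮ w in C(0, ρ), (w - z)⁻¹) • f z := by
    intro ρ hρ hne hsub
    have h1 : EqOn (dslope f z) (fun w => (w - z)⁻¹ • f w - (w - z)⁻¹ • f z)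
        (sphere (0:ℂ) ρ) := by
      intro w hw
      rw [dslope_of_ne f (hne w hw), slope]
      simp only [vsub_eq_sub, smul_eq_mul]
      ring
    rw [circleIntegral.integral_congr hρ.le h1]
    have hi1 : CircleIntegrable (fun w => (w - z)⁻¹ • f w) 0 ρ := by
      apply ContinuousOn.circleIntegrable hρ.le
      intro w hw
      exact (((continuousOn_id.sub continuousOn_const).inv₀
        (fun x hx => sub_ne_zero.mpr (hne x hx))).smul (hcont.mono hsub)) w hw
    have hi2 : CircleIntegrable (fun w => (w - z)⁻¹ • f z) 0 ρ := by
      apply ContinuousOn.circleIntegrable hρ.le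
      exact ((continuousOn_id.sub continuousOn_const).inv₀
        (fun x hx => sub_ne_zero.mpr (hne x hx))).smul continuousOn_const
    rw [circleIntegral.integral_sub hi1 hi2]
    congr 1
    rw [← circleIntegral.integral_smul_const]
  have h0R : 0 < R := lt_of_lt_of_le h0r hrR
  rw [hexp R h0R hzsR hsphR, hexp r h0r hzsr hsphr] at heq
  have houtR : (∮ w in C(0, R), (w - z)⁻¹) = 2 * Real.pi * Complex.I :=
    circleIntegral.integral_sub_inv_of_mem_ball (by
      simp only [mem_ball, Complex.dist_eq, sub_zero]; exact hzR)
  have hinr : (∮ w in C(0, r), (w - z)⁻¹) = 0 := by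
    apply Complex.circleIntegral_eq_zero_of_differentiable_on_off_countable h0r.le
      Set.countable_empty
    · intro w hw
      simp only [mem_closedBall, Complex.dist_eq, sub_zero] at hw
      have hwz : w - z ≠ 0 := by
        intro h
        rw [sub_eq_zero] at h
        subst h
        exact absurd hw (not_le.mpr hzr)
      exact (((continuousAt_id.sub continuousAt_const).inv₀ hwz).continuousWithinAt)
    · rintro w ⟨hw, -⟩
      simp only [mem_ball, Complex.dist_eq, sub_zero] at hw
      have hwz : w - z ≠ 0 := by
        intro h
        rw [sub_eq_zero] at h
        subst h
        exact absurd hw (not_lt.mpr hzr.le)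
      exact (differentiableAt_id.sub_const z).inv hwz
  rw [houtR, hinr] at heq
  simp only [zero_smul, sub_zero, smul_eq_mul] at heq
  linear_combination -heq

lemma outer_hasSum {f : ℂ → ℂ} {R : ℝ} (hR : 0 < R)
    (hfi : CircleIntegrable f 0 R) {z : ℂ} (hz : ‖z‖ < R) :
    HasSum (fun n : ℕ => lCoef f R n * z ^ n)
      ((2 * Real.pi * Complex.I : ℂ)⁻¹ • ∮ w in C(0, R), (w - z)⁻¹ • f w) := by
  have h := hasSum_cauchyPowerSeries_integral (c := 0) hfi hz
  simp only [zero_add] at h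
  convert h using 2 with n
  · rfl
  rw [cauchyPowerSeries_apply]
  rw [lCoef]
  have hcongr : (∮ w in C(0, R), (z / (w - 0)) ^ n • (w - 0)⁻¹ • f w) =
      ∮ w in C(0, R), z ^ n • (w ^ (-(n:ℤ)-1 : ℤ) • f w) := by
    refine circleIntegral.integral_congr hR.le fun w hw => ?_
    have hw0 : w ≠ 0 := by
      simp only [mem_sphere_iff_norm, sub_zero] at hw
      intro h; rw [h] at hw; simp at hw; linarith
    simp only [sub_zero, smul_eq_mul, div_pow]
    rw [show (-(n:ℤ)-1 : ℤ) = -(n+1 : ℤ) by ring, zpow_neg,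
      show ((n:ℤ)+1 : ℤ) = ((n+1 : ℕ) : ℤ) by push_cast; ring, zpow_natCast, pow_succ]
    field_simp
  rw [hcongr, circleIntegral.integral_smul, smul_comm]
  simp only [smul_eq_mul]
  ring

lemma inner_hasSum {f : ℂ → ℂ} {r : ℝ} (hr : 0 < r)
    (hfc : Continuous (fun θ : ℝ => f (circleMap 0 r θ))) {z : ℂ}
    (hz : r < ‖z‖) :
    HasSum (fun n : ℕ => lCoef f r (-((n:ℤ)+1)) * (z⁻¹) ^ (n+1))
      (-(2 * Real.pi * Complex.I : ℂ)⁻¹ • ∮ w in C(0, r), (w - z)⁻¹ • f w) := by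
  have hz0 : z ≠ 0 := by
    intro h; rw [h] at hz; simp at hz; linarith
  have habs : ∀ θ, ‖circleMap 0 r θ‖ = r := fun θ => by
    rw [norm_circleMap_zero, _root_.abs_of_pos hr]
  have hwz : ∀ θ, circleMap 0 r θ - z ≠ 0 := by
    intro θ h
    rw [sub_eq_zero] at h
    have := habs θ
    rw [h] at this
    exact absurd this.symm (ne_of_lt hz)
  set w : ℝ → ℂ := circleMap 0 r with hw
  set F : ℕ → ℝ → ℂ :=
    fun n θ => (-Complex.I * (z⁻¹) ^ (n+1)) * ((w θ) ^ (n+1) * f (w θ)) with hF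
  set μ : Measure ℝ := volume.restrict (Set.Ioc 0 (2 * Real.pi)) with hμ
  have h2pi : (0:ℝ) ≤ 2 * Real.pi := by positivity
  have hpt : ∀ θ : ℝ, HasSum (fun n => F n θ)
      (deriv (circleMap 0 r) θ • ((w θ - z)⁻¹ • f (w θ))) := by
    intro θ
    have hq : ‖w θ / z‖ < 1 := by
      rw [norm_div, habs θ]
      rw [div_lt_one (lt_trans hr hz)]
      exact hz
    have hgeo := (hasSum_geometric_of_norm_lt_one hq).mul_left
      (-(w θ * Complex.I * f (w θ)) * z⁻¹)
    have hterm : ∀ n : ℕ, (-(w θ * Complex.I * f (w θ)) * z⁻¹) * (w θ / z) ^ n = F n θ := by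
      intro n
      rw [hF]
      simp only [div_pow, div_eq_mul_inv, ← inv_pow]
      ring
    have hval : (-(w θ * Complex.I * f (w θ)) * z⁻¹) * (1 - w θ / z)⁻¹ =
        deriv (circleMap 0 r) θ • ((w θ - z)⁻¹ • f (w θ)) := by
      rw [deriv_circleMap]
      simp only [smul_eq_mul]
      have h1 : (1 - w θ / z) ≠ 0 := by
        rw [sub_ne_zero]
        intro h
        have : w θ = z := by field_simp at h; rw [h]
        exact hwz θ (by rw [this]; ring)
      have e1 : 1 - w θ / z = (z - w θ) / z := by field_simp
      rw [e1, inv_div, div_eq_mul_inv,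
        show (z - w θ)⁻¹ = -((w θ - z)⁻¹) by rw [show z - w θ = -(w θ - z) by ring, inv_neg]]
      have e3 : z⁻¹ * z = 1 := inv_mul_cancel₀ hz0
      linear_combination (w θ * Complex.I * f (w θ) * (w θ - z)⁻¹) * e3
    rw [← funext hterm, ← hval]
    exact hgeo
  have h2πI : (2 * Real.pi * Complex.I : ℂ) ≠ 0 := by
    simp [Real.pi_ne_zero, Complex.I_ne_zero, Complex.ext_iff, Real.pi_pos.ne']
  have hwc : Continuous w := continuous_circleMap 0 r
  have hFc : ∀ n, Continuous (F n) := fun n =>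
    continuous_const.mul ((hwc.pow _).mul hfc)
  have hFint : ∀ n, Integrable (F n) μ := fun n => (hFc n).integrableOn_Ioc
  obtain ⟨M₀, hM₀⟩ := (isCompact_Icc (a := (0:ℝ)) (b := 2 * Real.pi)).exists_bound_of_continuousOn
    (hfc.continuousOn)
  set M : ℝ := max M₀ 0 with hM
  set q : ℝ := r / ‖z‖ with hqdef
  have hq0 : 0 ≤ q := div_nonneg hr.le (norm_nonneg z)
  have hq1 : q < 1 := (div_lt_one (lt_trans hr hz)).mpr hz
  have hnormF : ∀ (n : ℕ) (θ : ℝ), θ ∈ Set.Icc (0:ℝ) (2 * Real.pi) →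
      ‖F n θ‖ ≤ M * q ^ (n+1) := by
    intro n θ hθ
    rw [hF]
    simp only [norm_mul, norm_pow, norm_neg, norm_inv, Complex.norm_I, one_mul,
      habs θ]
    have hfb : ‖f (w θ)‖ ≤ M := le_trans (hM₀ θ hθ) (le_max_left _ _)
    have : (‖z‖)⁻¹ ^ (n+1) * (r ^ (n+1) * ‖f (w θ)‖) =
        q ^ (n+1) * ‖f (w θ)‖ := by
      rw [hqdef, div_pow, div_eq_mul_inv, ← inv_pow]
      ring
    rw [this]
    have hqp : 0 ≤ q ^ (n+1) := pow_nonneg hq0 _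
    nlinarith [norm_nonneg (f (w θ))]
  have hIbound : ∀ n, (∫ θ, ‖F n θ‖ ∂μ) ≤ (2 * Real.pi) * (M * q ^ (n+1)) := by
    intro n
    have hMnn : 0 ≤ M := le_max_right _ _
    have h1 : (∫ θ, ‖F n θ‖ ∂μ) ≤ ∫ _ in Set.Ioc (0:ℝ) (2 * Real.pi), (M * q ^ (n+1)) := by
      rw [hμ]
      refine setIntegral_mono_on ((hFc n).norm.integrableOn_Ioc) ?_ measurableSet_Ioc ?_
      · exact integrableOn_const (by rw [Real.volume_Ioc]; exact ENNReal.ofReal_ne_top)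
      · intro θ hθ
        exact hnormF n θ ⟨hθ.1.le, hθ.2⟩
    rw [setIntegral_const, smul_eq_mul,
      Real.volume_real_Ioc_of_le (by linarith : (0:ℝ) ≤ 2 * Real.pi)] at h1
    calc (∫ θ, ‖F n θ‖ ∂μ) ≤ (2 * Real.pi - 0) * (M * q ^ (n+1)) := h1
      _ = (2 * Real.pi) * (M * q ^ (n+1)) := by ring
  have hsumm : Summable (fun n => ∫ θ, ‖F n θ‖ ∂μ) := by
    refine Summable.of_nonneg_of_le (fun n => integral_nonneg fun θ => norm_nonneg _) hIbound ?_
    have hgs : Summable (fun n : ℕ => q ^ n) := summable_geometric_of_lt_one hq0 hq1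
    have := (hgs.mul_left (2 * Real.pi * (M * q)))
    refine this.congr fun n => ?_
    rw [pow_succ]
    ring
  have hswap := MeasureTheory.hasSum_integral_of_summable_integral_norm hFint hsumm
  have htsum_eq : (∫ θ, (∑' n, F n θ) ∂μ) = ∮ w' in C(0, r), (w' - z)⁻¹ • f w' := by
    rw [circleIntegral, intervalIntegral.integral_of_le h2pi, hμ]
    refine setIntegral_congr_fun measurableSet_Ioc fun θ _ => ?_
    exact (hpt θ).tsum_eq
  have hFn : ∀ n : ℕ, (∫ θ, F n θ ∂μ) =
      -(2 * Real.pi * Complex.I) * (lCoef f r (-((n:ℤ)+1)) * (z⁻¹) ^ (n+1)) := by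
    intro n
    have hdef : lCoef f r (-((n:ℤ)+1)) =
        (2 * Real.pi * Complex.I)⁻¹ • ∮ w' in C(0, r), w' ^ ((n:ℕ):ℤ) • f w' := by
      rw [lCoef]
      norm_num
    have hoint : (∮ w' in C(0, r), w' ^ ((n:ℕ):ℤ) • f w') =
        Complex.I * ∫ θ in (0:ℝ)..(2 * Real.pi), (w θ) ^ (n+1) * f (w θ) := by
      rw [circleIntegral, ← intervalIntegral.integral_const_mul]
      refine intervalIntegral.integral_congr fun θ _ => ?_
      rw [deriv_circleMap]
      simp only [smul_eq_mul, zpow_natCast]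
      ring
    have hIint : (∫ θ in (0:ℝ)..(2 * Real.pi), (w θ) ^ (n+1) * f (w θ)) =
        -Complex.I * ((2 * Real.pi * Complex.I) * lCoef f r (-((n:ℤ)+1))) := by
      rw [hdef, smul_eq_mul, ← mul_assoc (2 * Real.pi * Complex.I),
        mul_inv_cancel₀ h2πI, one_mul, hoint, ← mul_assoc, neg_mul, Complex.I_mul_I]
      simp
    have hμeq : (∫ θ, F n θ ∂μ) = ∫ θ in (0:ℝ)..(2 * Real.pi), F n θ :=
      (intervalIntegral.integral_of_le h2pi).symm
    rw [hμeq, hF]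
    rw [intervalIntegral.integral_const_mul, hIint]
    linear_combination (2 * (Real.pi:ℂ) * Complex.I * (z⁻¹) ^ (n+1) *
      lCoef f r (-((n:ℤ)+1))) * Complex.I_mul_I
  rw [funext hFn, htsum_eq] at hswap
  have hfinal := hswap.mul_left (-(2 * Real.pi * Complex.I : ℂ)⁻¹)
  have hterm2 : ∀ Y : ℂ, -(2 * Real.pi * Complex.I : ℂ)⁻¹ * (-(2 * Real.pi * Complex.I) * Y) = Y := by
    intro Y
    field_simp
  have hfun : (fun n : ℕ => -(2 * Real.pi * Complex.I : ℂ)⁻¹ *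
      (-(2 * Real.pi * Complex.I) * (lCoef f r (-((n:ℤ)+1)) * (z⁻¹) ^ (n+1)))) =
      fun n : ℕ => lCoef f r (-((n:ℤ)+1)) * (z⁻¹) ^ (n+1) := funext fun n => hterm2 _
  rw [hfun] at hfinal
  simpa [smul_eq_mul] using hfinal

/-- Every `f ∈ H²(A_{a,b})` decomposes as `f = g + h` with
`g ∈ H²(D_b)` and `h ∈ H²(ℂ \ closure D_a)`. -/
theorem hardy_annulus_decomposition (a b : ℝ) (ha : 0 < a) (hab : a < b)
    (f : ℂ → ℂ) (hf : MemH2 a b f) :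
    ∃ g h : ℂ → ℂ,
      AnalyticOnNhd ℂ g {z : ℂ | ‖z‖ < b} ∧
      (∃ C : ℝ, ∀ r ∈ Set.Ioo (0:ℝ) b, M2sq g r ≤ C) ∧
      AnalyticOnNhd ℂ h {z : ℂ | a < ‖z‖} ∧
      (∃ C : ℝ, ∀ r ∈ Set.Ioi a, M2sq h r ≤ C) ∧
      (∀ z ∈ cAnnulus a b, f z = g z + h z) := by
  classical
  obtain ⟨hfa, C, hC⟩ := hf
  have hb0 : 0 < b := ha.trans hab
  set C₀ : ℝ := max C 0 with hC₀def
  have hC₀ : ∀ ρ ∈ Set.Ioo a b, M2sq f ρ ≤ C₀ := fun ρ hρ => (hC ρ hρ).trans (le_max_left _ _)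
  have hC₀nn : 0 ≤ C₀ := le_max_right _ _
  have h2πpos : (0:ℝ) < 2 * Real.pi := by positivity
  have h2πI : (2 * Real.pi * Complex.I : ℂ) ≠ 0 := by
    simp [Real.pi_ne_zero, Complex.I_ne_zero, Complex.ext_iff, Real.pi_pos.ne']
  have hfc : ContinuousOn f (cAnnulus a b) := fun w hw =>
    (hfa w hw).continuousAt.continuousWithinAt
  have hcircv : ∀ (ρ : ℝ) (φ : ℝ), 0 < ρ → ‖circleMap 0 ρ φ‖ = ρ := by
    intro ρ φ hρ
    rw [norm_circleMap_zero, _root_.abs_of_pos hρ]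
  have hcirc : ∀ ρ ∈ Set.Ioo a b, Continuous (fun θ : ℝ => f (circleMap 0 ρ θ)) := by
    intro ρ hρ
    refine hfc.comp_continuous (continuous_circleMap 0 ρ) fun θ => ?_
    refine ⟨?_, ?_⟩ <;> rw [hcircv ρ θ (ha.trans hρ.1)]
    · exact hρ.1
    · exact hρ.2
  have hsph : ∀ ρ ∈ Set.Ioo a b, Metric.sphere (0:ℂ) ρ ⊆ cAnnulus a b := by
    intro ρ hρ w hw
    simp only [Metric.mem_sphere, Complex.dist_eq, sub_zero] at hw
    exact ⟨hw ▸ hρ.1, hw ▸ hρ.2⟩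
  have hfint : ∀ ρ ∈ Set.Ioo a b, CircleIntegrable f 0 ρ := fun ρ hρ =>
    ContinuousOn.circleIntegrable (ha.trans hρ.1).le (hfc.mono (hsph ρ hρ))
  set ρ₀ : ℝ := (a + b) / 2 with hρ₀def
  have hρ₀ : ρ₀ ∈ Set.Ioo a b := ⟨by simp only [hρ₀def]; linarith, by simp only [hρ₀def]; linarith⟩
  set c : ℤ → ℂ := fun n => lCoef f ρ₀ n with hcdef
  have hconst : ∀ ρ ∈ Set.Ioo a b, ∀ n : ℤ, lCoef f ρ n = c n := by
    intro ρ hρ n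
    rcases le_total ρ ρ₀ with hle | hle
    · exact (lCoef_const ha hρ.1 hle hρ₀.2 hfa n).symm
    · exact lCoef_const ha hρ₀.1 hle hρ.2 hfa n
  have hFour : ∀ ρ ∈ Set.Ioo a b, ∀ n : ℤ, fCoef f ρ n = c n * (ρ:ℂ) ^ (n:ℤ) := by
    intro ρ hρ n
    rw [fCoef_eq_lCoef f (ha.trans hρ.1) n, hconst ρ hρ n]
  -- key finite Bessel bound
  have hkey : ∀ ρ ∈ Set.Ioo a b, ∀ S : Finset ℤ,
      (∑ n ∈ S, (‖c n‖ * (ρ:ℝ) ^ (n:ℤ)) ^ 2) ≤ C₀ := by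
    intro ρ hρ S
    have hρpos : 0 < ρ := ha.trans hρ.1
    have hbes := bessel f ρ (hcirc ρ hρ) S
    have hnc : ∀ n : ℤ, ‖fCoef f ρ n‖ = ‖c n‖ * (ρ:ℝ) ^ (n:ℤ) := by
      intro n
      rw [hFour ρ hρ n, norm_mul]
      congr 1
      rw [norm_zpow, Complex.norm_real, Real.norm_eq_abs, _root_.abs_of_pos hρpos]
    have hint : (∫ θ in (0:ℝ)..(2 * Real.pi), ‖f (circleMap 0 ρ θ)‖ ^ 2) ≤ 2 * Real.pi * C₀ := by
      have hM := hC₀ ρ hρ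
      rw [M2sq] at hM
      have : (∫ φ in (0:ℝ)..(2 * Real.pi), ‖f (circ ρ φ)‖ ^ 2) =
          ∫ θ in (0:ℝ)..(2 * Real.pi), ‖f (circleMap 0 ρ θ)‖ ^ 2 :=
        intervalIntegral.integral_congr fun θ _ => by rw [circ_eq]
      rw [this] at hM
      calc (∫ θ in (0:ℝ)..(2 * Real.pi), ‖f (circleMap 0 ρ θ)‖ ^ 2)
          = (2 * Real.pi) * ((1 / (2 * Real.pi)) *
              ∫ θ in (0:ℝ)..(2 * Real.pi), ‖f (circleMap 0 ρ θ)‖ ^ 2) := by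
            field_simp
        _ ≤ 2 * Real.pi * C₀ := by nlinarith
    have := hbes.trans hint
    have hsumeq : (∑ n ∈ S, ‖fCoef f ρ n‖ ^ 2) = ∑ n ∈ S, (‖c n‖ * (ρ:ℝ) ^ (n:ℤ)) ^ 2 :=
      Finset.sum_congr rfl fun n _ => by rw [hnc n]
    rw [hsumeq] at this
    nlinarith
  have hcb : ∀ ρ ∈ Set.Ioo a b, ∀ n : ℤ, ‖c n‖ * (ρ:ℝ) ^ (n:ℤ) ≤ Real.sqrt C₀ := by
    intro ρ hρ n
    have h1 := hkey ρ hρ {n}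
    rw [Finset.sum_singleton] at h1
    have hnn : 0 ≤ ‖c n‖ * (ρ:ℝ) ^ (n:ℤ) := by
      have : (0:ℝ) < (ρ:ℝ) ^ (n:ℤ) := zpow_pos (ha.trans hρ.1) _
      positivity
    calc ‖c n‖ * (ρ:ℝ) ^ (n:ℤ) = Real.sqrt ((‖c n‖ * (ρ:ℝ) ^ (n:ℤ)) ^ 2) :=
        (Real.sqrt_sq hnn).symm
      _ ≤ Real.sqrt C₀ := Real.sqrt_le_sqrt h1
  -- coefficient sequences
  set cg : ℕ → ℂ := fun n => c n with hcgdef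
  set cd : ℕ → ℂ := fun k => if k = 0 then 0 else c (-(k:ℤ)) with hcddef
  -- bounds for radii
  have hgb : ∀ r : ℝ, 0 ≤ r → r < b → ∀ n : ℕ, ‖cg n‖ * r ^ n ≤ Real.sqrt C₀ := by
    intro r hr0 hrb n
    set ρ : ℝ := max ((r + b) / 2) ρ₀ with hρdef
    have hρab : ρ ∈ Set.Ioo a b :=
      ⟨lt_of_lt_of_le hρ₀.1 (le_max_right _ _), max_lt (by linarith) hρ₀.2⟩
    have hrρ : r ≤ ρ := le_trans (by linarith) (le_max_left _ _)
    have h1 := hcb ρ hρab (n:ℤ)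
    rw [zpow_natCast] at h1
    calc ‖cg n‖ * r ^ n ≤ ‖c n‖ * ρ ^ n :=
        mul_le_mul_of_nonneg_left (pow_le_pow_left₀ hr0 hrρ n) (norm_nonneg _)
      _ ≤ Real.sqrt C₀ := h1
  have hainv : 0 < a⁻¹ := inv_pos.mpr ha
  have hdb : ∀ s : ℝ, 0 ≤ s → s < a⁻¹ → ∀ k : ℕ, ‖cd k‖ * s ^ k ≤ Real.sqrt C₀ := by
    intro s hs0 hsa k
    match k with
    | 0 => simp [hcddef, Real.sqrt_nonneg]
    | (m+1) =>
      rcases eq_or_lt_of_le hs0 with h0 | h0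
      · rw [← h0]
        simp [Real.sqrt_nonneg]
      · have hsainv : a < s⁻¹ := by
          rw [← inv_inv a]
          exact inv_strictAnti₀ h0 hsa
        set ρ : ℝ := min ((a + s⁻¹) / 2) ρ₀ with hρdef
        have hρab : ρ ∈ Set.Ioo a b :=
          ⟨lt_min (by linarith) hρ₀.1, lt_of_le_of_lt (min_le_right _ _) hρ₀.2⟩
        have hρpos : 0 < ρ := ha.trans hρab.1
        have hρs : ρ * s < 1 := by
          have hρlt : ρ < s⁻¹ := lt_of_le_of_lt (min_le_left _ _) (by linarith)
          calc ρ * s < s⁻¹ * s := by nlinarith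
            _ = 1 := inv_mul_cancel₀ h0.ne'
        have h1 := hcb ρ hρab (-((m+1:ℕ):ℤ))
        have e : s ^ (m+1) = ρ ^ (-((m+1:ℕ):ℤ)) * (ρ*s) ^ (m+1) := by
          rw [zpow_neg, zpow_natCast, mul_pow]
          field_simp
        have h2 : (ρ*s) ^ (m+1) ≤ 1 := pow_le_one₀ (by positivity) hρs.le
        have hcdm : ‖cd (m+1)‖ = ‖c (-((m+1:ℕ):ℤ))‖ := by
          simp [hcddef]
        calc ‖cd (m+1)‖ * s ^ (m+1)
            = (‖c (-((m+1:ℕ):ℤ))‖ * ρ ^ (-((m+1:ℕ):ℤ))) * (ρ*s) ^ (m+1) := by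
              rw [hcdm, e]; ring
          _ ≤ Real.sqrt C₀ * 1 := by
              refine mul_le_mul h1 h2 (by positivity) (Real.sqrt_nonneg _)
          _ = Real.sqrt C₀ := mul_one _
  have hgr := radius_ge (b := b) (K := Real.sqrt C₀) hgb
  have hdr := radius_ge (b := a⁻¹) (K := Real.sqrt C₀) hdb
  set g : ℂ → ℂ := (FormalMultilinearSeries.ofScalars ℂ cg).sum with hgdef
  set H : ℂ → ℂ := (FormalMultilinearSeries.ofScalars ℂ cd).sum with hHdef
  set h : ℂ → ℂ := fun z => H z⁻¹ with hhdef
  have hga : AnalyticOnNhd ℂ g {z : ℂ | ‖z‖ < b} := analyticOnNhd_ofScalars hb0 hgr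
  have hHa : AnalyticOnNhd ℂ H {z : ℂ | ‖z‖ < a⁻¹} :=
    analyticOnNhd_ofScalars hainv hdr
  have habsinv : ∀ z : ℂ, a < ‖z‖ → ‖z⁻¹‖ < a⁻¹ := by
    intro z hz
    rw [norm_inv]
    exact inv_strictAnti₀ ha hz
  have hha : AnalyticOnNhd ℂ h {z : ℂ | a < ‖z‖} := by
    intro z hz
    have hz0 : z ≠ 0 := by
      intro h0; rw [h0] at hz; simp at hz; linarith [hz]
    have h1 : AnalyticAt ℂ H z⁻¹ := hHa _ (habsinv z hz)
    have h2 : AnalyticAt ℂ (fun w : ℂ => w⁻¹) z := analyticAt_id.inv hz0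
    exact h1.comp h2
  -- sum representations
  have hg_sum : ∀ z : ℂ, ‖z‖ < b → HasSum (fun n : ℕ => cg n * z ^ n) (g z) := by
    intro z hzb
    have h0 : 0 < (FormalMultilinearSeries.ofScalars ℂ cg).radius :=
      lt_of_lt_of_le (by simp [hb0]) hgr
    have hsum := ((FormalMultilinearSeries.ofScalars ℂ cg).hasFPowerSeriesOnBall h0).hasSum
      (mem_emetric_ball_of_abs_lt hb0 hzb hgr)
    have e : (fun n : ℕ => FormalMultilinearSeries.ofScalars ℂ cg n fun _ => z) =
        fun n : ℕ => cg n * z ^ n := funext fun n => by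
      rw [FormalMultilinearSeries.ofScalars_apply_eq, smul_eq_mul]
    rw [e, zero_add] at hsum
    exact hsum
  have hH_sum : ∀ u : ℂ, ‖u‖ < a⁻¹ → HasSum (fun k : ℕ => cd k * u ^ k) (H u) := by
    intro u hu
    have h0 : 0 < (FormalMultilinearSeries.ofScalars ℂ cd).radius :=
      lt_of_lt_of_le (by simp [hainv]) hdr
    have hsum := ((FormalMultilinearSeries.ofScalars ℂ cd).hasFPowerSeriesOnBall h0).hasSum
      (mem_emetric_ball_of_abs_lt hainv hu hdr)
    have e : (fun n : ℕ => FormalMultilinearSeries.ofScalars ℂ cd n fun _ => u) =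
        fun n : ℕ => cd n * u ^ n := funext fun n => by
      rw [FormalMultilinearSeries.ofScalars_apply_eq, smul_eq_mul]
    rw [e, zero_add] at hsum
    exact hsum
  have hh_sum : ∀ z : ℂ, a < ‖z‖ →
      HasSum (fun k : ℕ => c (-((k:ℤ)+1)) * (z⁻¹) ^ (k+1)) (h z) := by
    intro z hz
    have h1 := hH_sum z⁻¹ (habsinv z hz)
    have h2 := (hasSum_nat_add_iff' 1).mpr h1
    simp only [Finset.range_one, Finset.sum_singleton, pow_zero, mul_one] at h2
    have hcd0 : cd 0 = 0 := by simp [hcddef]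
    rw [hcd0, sub_zero] at h2
    refine h2.congr_fun fun k => ?_
    have : cd (k+1) = c (-((k:ℤ)+1)) := by
      simp only [hcddef, if_neg (Nat.succ_ne_zero k)]
      norm_cast
    rw [this]
  have hcirccont : ∀ r : ℝ, Continuous (fun φ : ℝ => circ r φ) := fun r => by
    unfold circ
    exact continuous_const.mul (Complex.continuous_exp.comp
      (Complex.continuous_ofReal.mul continuous_const))
  refine ⟨g, h, hga, ⟨C₀, ?_⟩, hha, ⟨C₀, ?_⟩, ?_⟩
  · -- M2 bound for g
    rintro r ⟨hr0, hrb⟩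
    set ρ : ℝ := max ((r + b) / 2) ρ₀ with hρdef
    have hρab : ρ ∈ Set.Ioo a b :=
      ⟨lt_of_lt_of_le hρ₀.1 (le_max_right _ _), max_lt (by linarith) hρ₀.2⟩
    have hρpos : 0 < ρ := ha.trans hρab.1
    have hrρ : r < ρ := lt_of_lt_of_le (by linarith) (le_max_left _ _)
    have hq0 : 0 ≤ r / ρ := by positivity
    have hq1 : r / ρ < 1 := (div_lt_one hρpos).mpr hrρ
    refine M2sq_le_of_modes hr0 cg (fun n => (n:ℤ))
      (fun x y hxy => by simpa using hxy) ?_ ?_ ?_ ?_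
    · refine (hga.continuousOn).comp_continuous (hcirccont r) fun φ => ?_
      simp only [Set.mem_setOf_eq]
      rw [abs_circ hr0.le]
      exact hrb
    · refine Summable.of_nonneg_of_le (fun n => by
        have : (0:ℝ) < (r:ℝ) ^ ((n:ℕ):ℤ) := zpow_pos hr0 _
        positivity)
        (fun n => ?_) ((summable_geometric_of_lt_one hq0 hq1).mul_left (Real.sqrt C₀))
      have h1 := hcb ρ hρab ((n:ℕ):ℤ)
      rw [zpow_natCast] at h1 ⊢
      have e : r ^ (n:ℕ) = ρ ^ (n:ℕ) * (r/ρ) ^ (n:ℕ) := by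
        rw [div_pow]; field_simp
      calc ‖cg n‖ * r ^ (n:ℕ) = (‖c n‖ * ρ ^ (n:ℕ)) * (r/ρ) ^ (n:ℕ) := by rw [e]; ring
        _ ≤ Real.sqrt C₀ * (r/ρ) ^ (n:ℕ) :=
            mul_le_mul_of_nonneg_right h1 (by positivity)
    · intro φ
      have := hg_sum (circ r φ) (by rw [abs_circ hr0.le]; exact hrb)
      refine this.congr_fun fun n => ?_
      rw [zpow_natCast]
    · intro N
      have hrρ' : r ≤ ρ := hrρ.le
      have hS := hkey ρ hρab ((Finset.range N).map ⟨(fun n : ℕ => (n:ℤ)),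
        by intro x y hxy; simpa using hxy⟩)
      rw [Finset.sum_map] at hS
      change ∑ x ∈ Finset.range N, (‖c (x:ℤ)‖ * ρ ^ (x:ℤ)) ^ 2 ≤ C₀ at hS
      refine le_trans (Finset.sum_le_sum fun n _ => ?_) hS
      rw [zpow_natCast, zpow_natCast]
      have h1 : ‖cg n‖ * r ^ (n:ℕ) ≤ ‖c n‖ * ρ ^ (n:ℕ) :=
        mul_le_mul_of_nonneg_left (pow_le_pow_left₀ hr0.le hrρ' n) (norm_nonneg _)
      have h2 : 0 ≤ ‖cg n‖ * r ^ (n:ℕ) := by positivity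
      nlinarith
  · -- M2 bound for h
    rintro r hr
    rw [Set.mem_Ioi] at hr
    have hr0 : 0 < r := ha.trans hr
    set ρ : ℝ := min ((a + r) / 2) ρ₀ with hρdef
    have hρab : ρ ∈ Set.Ioo a b :=
      ⟨lt_min (by linarith) hρ₀.1, lt_of_le_of_lt (min_le_right _ _) hρ₀.2⟩
    have hρpos : 0 < ρ := ha.trans hρab.1
    have hρr : ρ < r := lt_of_le_of_lt (min_le_left _ _) (by linarith)
    have hq0 : 0 ≤ ρ / r := by positivity
    have hq1 : ρ / r < 1 := (div_lt_one hr0).mpr hρr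
    have hmono : ∀ k : ℕ, (r:ℝ) ^ (-((k:ℤ)+1)) ≤ ρ ^ (-((k:ℤ)+1)) := by
      intro k
      have e : ∀ x : ℝ, 0 < x → x ^ (-((k:ℤ)+1)) = (x ^ (k+1))⁻¹ := by
        intro x hx
        rw [show -((k:ℤ)+1) = -((k+1:ℕ):ℤ) by push_cast; ring, zpow_neg, zpow_natCast]
      rw [e r hr0, e ρ hρpos]
      exact inv_anti₀ (by positivity) (pow_le_pow_left₀ hρpos.le hρr.le _)
    have hzpr : ∀ (x : ℝ), 0 < x → x ^ (-((0:ℤ)+1)) = x⁻¹ := by intro x hx; norm_num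
    refine M2sq_le_of_modes hr0 (fun k : ℕ => c (-((k:ℤ)+1))) (fun k => -((k:ℤ)+1))
      (fun x y hxy => by simpa using hxy) ?_ ?_ ?_ ?_
    · refine (hha.continuousOn).comp_continuous (hcirccont r) fun φ => ?_
      simp only [Set.mem_setOf_eq]
      rw [abs_circ hr0.le]
      exact hr
    · refine Summable.of_nonneg_of_le (fun k => by
        have : (0:ℝ) < (r:ℝ) ^ (-((k:ℤ)+1)) := zpow_pos hr0 _
        positivity)
        (fun k => ?_)
        (((summable_geometric_of_lt_one hq0 hq1).mul_left (Real.sqrt C₀ * (ρ/r))))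
      have h1 := hcb ρ hρab (-((k:ℤ)+1))
      have e : (r:ℝ) ^ (-((k:ℤ)+1)) = ρ ^ (-((k:ℤ)+1)) * (ρ/r) ^ (k+1) := by
        rw [show -((k:ℤ)+1) = -((k+1:ℕ):ℤ) by push_cast; ring, zpow_neg, zpow_natCast,
          zpow_neg, zpow_natCast, div_pow]
        field_simp
      calc ‖c (-((k:ℤ)+1))‖ * (r:ℝ) ^ (-((k:ℤ)+1))
          = (‖c (-((k:ℤ)+1))‖ * ρ ^ (-((k:ℤ)+1))) * (ρ/r) ^ (k+1) := by rw [e]; ring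
        _ ≤ Real.sqrt C₀ * (ρ/r) ^ (k+1) :=
            mul_le_mul_of_nonneg_right h1 (by positivity)
        _ = Real.sqrt C₀ * (ρ/r) * (ρ/r) ^ k := by rw [pow_succ]; ring
    · intro φ
      have habs' : a < ‖circ r φ‖ := by rw [abs_circ hr0.le]; exact hr
      have hz0 : circ r φ ≠ 0 := by
        intro h0
        have := abs_circ hr0.le φ
        rw [h0] at this
        simp at this
        linarith
      have := hh_sum (circ r φ) habs'
      refine this.congr_fun fun k => ?_
      congr 1
      rw [inv_pow, ← zpow_natCast (circ r φ) (k+1), ← zpow_neg]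
      norm_num
    · intro N
      have hS := hkey ρ hρab ((Finset.range N).map ⟨(fun k : ℕ => -((k:ℤ)+1)),
        by intro x y hxy; simpa using hxy⟩)
      rw [Finset.sum_map] at hS
      change ∑ x ∈ Finset.range N, (‖c (-((x:ℤ)+1))‖ * ρ ^ (-((x:ℤ)+1))) ^ 2 ≤ C₀ at hS
      refine le_trans (Finset.sum_le_sum fun k _ => ?_) hS
      have h1 : ‖c (-((k:ℤ)+1))‖ * (r:ℝ) ^ (-((k:ℤ)+1)) ≤
          ‖c (-((k:ℤ)+1))‖ * ρ ^ (-((k:ℤ)+1)) :=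
        mul_le_mul_of_nonneg_left (hmono k) (norm_nonneg _)
      have h2 : 0 ≤ ‖c (-((k:ℤ)+1))‖ * (r:ℝ) ^ (-((k:ℤ)+1)) := by
        have : (0:ℝ) < (r:ℝ) ^ (-((k:ℤ)+1)) := zpow_pos hr0 _
        positivity
      nlinarith
  · -- decomposition
    rintro z ⟨hz1, hz2⟩
    set r : ℝ := (a + ‖z‖) / 2 with hrdef
    set R : ℝ := (‖z‖ + b) / 2 with hRdef
    have har : a < r := by simp only [hrdef]; linarith
    have hzr : r < ‖z‖ := by simp only [hrdef]; linarith
    have hzR : ‖z‖ < R := by simp only [hRdef]; linarith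
    have hRb : R < b := by simp only [hRdef]; linarith
    have h0r : 0 < r := ha.trans har
    have h0R : 0 < R := h0r.trans (hzr.trans hzR)
    have hrab : r ∈ Set.Ioo a b := ⟨har, hzr.trans (hzR.trans hRb)⟩
    have hRab : R ∈ Set.Ioo a b := ⟨har.trans (hzr.trans hzR), hRb⟩
    have htc := two_circle ha har hRb hfa hzr hzR
    -- outer
    have hou := outer_hasSum h0R (hfint R hRab) hzR
    have hfunR : (fun n : ℕ => lCoef f R (n:ℤ) * z ^ n) = fun n : ℕ => cg n * z ^ n :=
      funext fun n => by rw [hconst R hRab (n:ℤ)]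
    rw [hfunR] at hou
    have hgz := (hg_sum z hz2).unique hou
    -- inner
    have hin := inner_hasSum h0r (hcirc r hrab) hzr
    have hfunr : (fun n : ℕ => lCoef f r (-((n:ℤ)+1)) * (z⁻¹) ^ (n+1)) =
        fun n : ℕ => c (-((n:ℤ)+1)) * (z⁻¹) ^ (n+1) :=
      funext fun n => by rw [hconst r hrab (-((n:ℤ)+1))]
    rw [hfunr] at hin
    have hhz := (hh_sum z hz1).unique hin
    simp only [smul_eq_mul, neg_mul] at hgz hhz
    have hinv : (2 * Real.pi * Complex.I : ℂ)⁻¹ * (2 * Real.pi * Complex.I) = 1 :=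
      inv_mul_cancel₀ h2πI
    linear_combination (-1 : ℂ) * hgz + (-1 : ℂ) * hhz +
      (2 * Real.pi * Complex.I : ℂ)⁻¹ * htc + (-(f z)) * hinv

end HardyAux
end
end

section
/- Let 0 < a < b and d ≥ 2. For every ε > 0 with ε ≤ (b − a)/3 there exists a constant C_ε > 0, independent of k, such that for all integers k ≥ 0 and all z, τ ∈ ℂ with a + ε < |z| < b − ε and (|τ| = a or |τ| = b), one has |K_k(z,τ)| ≤ C_ε. -/
open MeasureTheory Complex Filter Set

noncomputable section

/-- The kernel `K_k¹(z,τ) = Σ_{j≥0} (z/τ)^{k+2j}`. -/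
def K1 (k : ℕ) (z τ : ℂ) : ℂ := ∑' j : ℕ, (z / τ) ^ (k + 2 * j)

/-- The kernel `K_k²(z,τ) = Σ_{j≥0, -d-k+2+2j ≥ 0} (z/τ)^{-d-k+2+2j}`. -/
def K2 (d k : ℕ) (z τ : ℂ) : ℂ :=
  ∑' j : ℕ, if 0 ≤ 2 + 2 * (j : ℤ) - d - k then (z / τ) ^ (2 + 2 * (j : ℤ) - d - k) else 0

/-- The kernel `K_k³(z,τ) = Σ_{j≥0, -d-k+2+2j < 0} (z/τ)^{-d-k+2+2j}` (a finite sum). -/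
def K3 (d k : ℕ) (z τ : ℂ) : ℂ :=
  ∑' j : ℕ, if 2 + 2 * (j : ℤ) - d - k < 0 then (z / τ) ^ (2 + 2 * (j : ℤ) - d - k) else 0

/-- The Cauchy type kernel for the annulus: `K_k = K_k¹ + K_k²` on `|τ| = b` and
`K_k = K_k³` on `|τ| = a`. -/
def Kk (d k : ℕ) (b : ℝ) (z τ : ℂ) : ℂ :=
  if ‖τ‖ = b then K1 k z τ + K2 d k z τ else K3 d k z τ

lemma helper1 (q : ℝ) (h0 : 0 ≤ q) (h1 : q < 1) (f : ℕ → ℂ) (j0 : ℕ)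
    (hb : ∀ j, ‖f j‖ ≤ if j0 ≤ j then q ^ (j - j0) else 0) :
    ‖∑' j, f j‖ ≤ (1 - q)⁻¹ := by
  have hgeq : (fun i => (if j0 ≤ i + j0 then q ^ (i + j0 - j0) else 0 : ℝ)) = fun i => q ^ i := by
    funext i; simp
  have hg : Summable (fun j => if j0 ≤ j then q ^ (j - j0) else (0:ℝ)) := by
    refine (summable_nat_add_iff j0).1 ?_
    rw [hgeq]
    exact summable_geometric_of_lt_one h0 h1
  have hgt : (∑' j, if j0 ≤ j then q ^ (j - j0) else (0:ℝ)) = (1 - q)⁻¹ := by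
    rw [← hg.sum_add_tsum_nat_add j0]
    rw [hgeq, tsum_geometric_of_lt_one h0 h1]
    rw [Finset.sum_eq_zero]
    · ring
    · intro i hi
      rw [Finset.mem_range] at hi
      rw [if_neg (by omega)]
  have hf : Summable fun j => ‖f j‖ :=
    Summable.of_nonneg_of_le (fun _ => norm_nonneg _) hb hg
  calc ‖∑' j, f j‖ ≤ ∑' j, ‖f j‖ := norm_tsum_le_tsum_norm hf
    _ ≤ ∑' j, if j0 ≤ j then q ^ (j - j0) else 0 := Summable.tsum_le_tsum hb hf hg
    _ = (1 - q)⁻¹ := hgt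


lemma helper2 (p : ℝ) (h0 : 0 ≤ p) (h1 : p < 1) (f : ℕ → ℂ) (j1 : ℕ)
    (hb : ∀ j, ‖f j‖ ≤ if j ≤ j1 then p ^ (j1 - j) else 0) :
    ‖∑' j, f j‖ ≤ (1 - p)⁻¹ := by
  have hz : ∀ j ∉ Finset.range (j1 + 1), f j = 0 := by
    intro j hj
    rw [Finset.mem_range] at hj
    have := hb j
    rw [if_neg (by omega)] at this
    exact norm_le_zero_iff.1 this
  rw [tsum_eq_sum hz]
  calc ‖∑ j ∈ Finset.range (j1 + 1), f j‖ ≤ ∑ j ∈ Finset.range (j1 + 1), ‖f j‖ :=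
        norm_sum_le _ _
    _ ≤ ∑ j ∈ Finset.range (j1 + 1), p ^ (j1 - j) := by
        refine Finset.sum_le_sum fun j hj => ?_
        rw [Finset.mem_range] at hj
        have := hb j
        rwa [if_pos (by omega)] at this
    _ = ∑ j ∈ Finset.range (j1 + 1), p ^ j := by
        rw [← Finset.sum_range_reflect]
        refine Finset.sum_congr rfl fun j hj => ?_
        rw [Finset.mem_range] at hj
        congr 1
        omega
    _ ≤ ∑' j : ℕ, p ^ j :=
        Summable.sum_le_tsum _ (fun i _ => pow_nonneg h0 i) (summable_geometric_of_lt_one h0 h1)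
    _ = (1 - p)⁻¹ := tsum_geometric_of_lt_one h0 h1


/-- Uniform boundedness of the Cauchy type kernels: for every
`0 < ε ≤ (b-a)/3` there is a constant `C_ε > 0`, independent of `k`, bounding
`|K_k(z,τ)|` for `a + ε < |z| < b - ε` and `|τ| = a` or `|τ| = b`. -/
theorem cauchy_kernel_uniform_bound (a b : ℝ) (ha : 0 < a) (hab : a < b)
    (d : ℕ) (hd : 2 ≤ d) :
    ∀ ε : ℝ, 0 < ε → ε ≤ (b - a) / 3 →
      ∃ C : ℝ, 0 < C ∧
        ∀ (k : ℕ) (z τ : ℂ), a + ε < ‖z‖ → ‖z‖ < b - ε →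
          (‖τ‖ = a ∨ ‖τ‖ = b) →
          ‖Kk d k b z τ‖ ≤ C := by
  intro ε hε hε3
  have hb0 : 0 < b := ha.trans hab
  set q : ℝ := (b - ε) / b with hqdef
  set p : ℝ := a / (a + ε) with hpdef
  have hq0 : 0 ≤ q := by
    apply div_nonneg _ hb0.le
    nlinarith
  have hq1 : q < 1 := by
    rw [div_lt_one hb0]; linarith
  have hp0 : 0 ≤ p := by positivity
  have hp1 : p < 1 := by
    rw [div_lt_one (by linarith)]; linarith
  have h1q : 0 < (1 - q)⁻¹ := inv_pos.2 (by linarith)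
  have h1p : 0 < (1 - p)⁻¹ := inv_pos.2 (by linarith)
  refine ⟨2 * (1 - q)⁻¹ + (1 - p)⁻¹, by linarith, ?_⟩
  intro k z τ hz1 hz2 hτ
  rcases hτ with hτa | hτb
  · -- inner boundary: K3
    have hne : ‖τ‖ ≠ b := by rw [hτa]; exact ne_of_lt hab
    rw [Kk, if_neg hne, K3]
    have hτ0 : τ ≠ 0 := by
      intro h; rw [h] at hτa; simp at hτa; linarith
    have hz0 : z ≠ 0 := by
      intro h; rw [h] at hz1; simp at hz1; linarith
    set w : ℂ := z / τ with hwdef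
    have hw0 : 0 < ‖w‖ := by
      rw [norm_pos_iff]; exact div_ne_zero hz0 hτ0
    have hwp : 1 ≤ p * ‖w‖ := by
      rw [hwdef, norm_div, hτa, hpdef]
      rw [div_mul_div_comm]
      rw [le_div_iff₀ (by positivity)]
      nlinarith
    refine le_trans ?_ (by linarith : (1 - p)⁻¹ ≤ 2 * (1 - q)⁻¹ + (1 - p)⁻¹)
    refine helper2 p hp0 hp1 _ ((d + k - 3) / 2) fun j => ?_
    by_cases hn : 2 + 2 * (j : ℤ) - d - k < 0
    · rw [if_pos hn]
      set n : ℤ := 2 + 2 * (j : ℤ) - d - k with hndef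
      set m : ℕ := (-n).toNat with hmdef
      have hmn : n = -(m : ℤ) := by omega
      rw [hmn, zpow_neg, zpow_natCast, norm_inv, norm_pow]
      have h1 : (1:ℝ) ≤ (p * ‖w‖) ^ m := one_le_pow₀ hwp
      rw [mul_pow] at h1
      have hwm : 0 < ‖w‖ ^ m := pow_pos hw0 m
      have h2 : (‖w‖ ^ m)⁻¹ ≤ p ^ m := by
        rw [inv_le_iff_one_le_mul₀ hwm]
        linarith
      have hj : j ≤ (d + k - 3) / 2 := by omega
      rw [if_pos hj]
      refine h2.trans (pow_le_pow_of_le_one hp0 hp1.le ?_)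
      omega
    · rw [if_neg hn, norm_zero]
      split
      · exact pow_nonneg hp0 _
      · exact le_refl 0
  · -- outer boundary: K1 + K2
    rw [Kk, if_pos hτb]
    set w : ℂ := z / τ with hwdef
    have hτ0 : τ ≠ 0 := by
      intro h; rw [h] at hτb; simp at hτb; linarith
    have hwq : ‖w‖ ≤ q := by
      rw [hwdef, norm_div, hτb, hqdef]
      gcongr
    have hw0 : 0 ≤ ‖w‖ := norm_nonneg _
    have hK1 : ‖K1 k z τ‖ ≤ (1 - q)⁻¹ := by
      rw [K1]
      refine helper1 q hq0 hq1 _ 0 fun j => ?_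
      rw [if_pos (Nat.zero_le j), Nat.sub_zero, norm_pow]
      calc ‖w‖ ^ (k + 2 * j) ≤ q ^ (k + 2 * j) := pow_le_pow_left₀ hw0 hwq _
        _ ≤ q ^ j := pow_le_pow_of_le_one hq0 hq1.le (by omega)
    have hK2 : ‖K2 d k z τ‖ ≤ (1 - q)⁻¹ := by
      rw [K2]
      refine helper1 q hq0 hq1 _ ((d + k - 1) / 2) fun j => ?_
      by_cases hn : 0 ≤ 2 + 2 * (j : ℤ) - d - k
      · rw [if_pos hn]
        set n : ℤ := 2 + 2 * (j : ℤ) - d - k with hndef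
        have hmn : n = ((n.toNat : ℤ)) := by omega
        rw [hmn, zpow_natCast, norm_pow]
        have hj : (d + k - 1) / 2 ≤ j := by omega
        rw [if_pos hj]
        calc ‖w‖ ^ n.toNat ≤ q ^ n.toNat := pow_le_pow_left₀ hw0 hwq _
          _ ≤ q ^ (j - (d + k - 1) / 2) := pow_le_pow_of_le_one hq0 hq1.le (by omega)
      · rw [if_neg hn, norm_zero]
        split
        · exact pow_nonneg hq0 _
        · exact le_refl 0
    calc ‖K1 k z τ + K2 d k z τ‖ ≤ ‖K1 k z τ‖ + ‖K2 d k z τ‖ := norm_add_le _ _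
      _ ≤ 2 * (1 - q)⁻¹ + (1 - p)⁻¹ := by linarith
end
end

section
/- Let 0 < a' < a < b < b', d ≥ 2, L > 1, N ≥ 1, and let μ be a pseudo-positive measure on the annular region A_{a,b} ⊂ ℝ^d with component measures μ_{k,ℓ} on [a,b]. For each (k,ℓ) let μ^G_{k,ℓ} = Σ_{j=1}^{2N} λ_{k,ℓ;j} δ(t − t_{k,ℓ;j}) be a Gauss–Jacobi quadrature measure with knots in [a,b] and nonnegative weights, exact for all Q ∈ V_{k,d,2N}, and let C_k be constants such that |∫_a^b g dμ_{k,ℓ} − ∫_a^b g dμ^G_{k,ℓ}| ≤ C_k ‖g‖_{H²(A_{a',b'})} for all g ∈ H^{2,k}(A_{a',b'}). Suppose f ∈ H_L²(𝒜_{a',b'}) has finite Laplace–Fourier expansion f(rθ) = Σ_{k ≤ k₀, ℓ} f_{k,ℓ}(r) Y_{k,ℓ}(θ). Then the cubature error satisfies |∫_{A_{a,b}} f dμ − C_N(f)| ≤ ( Σ_{k ≤ k₀, ℓ} C_k² / L^{2k} )^{1/2} · ‖f‖_{H_L²(𝒜_{a',b'})}, where C_N(f) = Σ_{k ≤ k₀,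 ℓ} ∫_a^b f_{k,ℓ}(r) dμ^G_{k,ℓ}(r). -/
open MeasureTheory Complex Filter Set

noncomputable section

/-- The `j`-th Laurent coefficient of `f`, computed on the circle of radius `(a+b)/2`:
`c_j = (1/2π) ∫₀^{2π} f(re^{iφ}) (re^{iφ})^{-j} dφ`. -/
def laurentCoeff (a b : ℝ) (f : ℂ → ℂ) (j : ℤ) : ℂ :=
  (1 / (2 * Real.pi) : ℂ) *
    ∫ φ in (0:ℝ)..(2 * Real.pi), f (circ ((a + b) / 2) φ) * (circ ((a + b) / 2) φ) ^ (-j)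

/-- The squared Hardy norm `‖f‖²_{H²(A_{a,b})} = 2π Σ_{j∈ℤ} |c_j|² (a^{2j} + b^{2j})`. -/
def hardyNormSq (a b : ℝ) (f : ℂ → ℂ) : ℝ :=
  2 * Real.pi * ∑' j : ℤ, ‖laurentCoeff a b f j‖ ^ 2 * (a ^ (2 * j) + b ^ (2 * j))

/-- `g` belongs to the linear span of the functions `z^{k+2j}` (`j ≥ 0`) and
`z^{-d-k+2+2j}` (`j ≥ 0`). -/
def InSpanV (d k : ℕ) (g : ℂ → ℂ) : Prop :=
  ∃ (n : ℕ) (p q : ℕ → ℂ), ∀ z : ℂ, z ≠ 0 →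
    g z = ∑ j ∈ Finset.range n,
      (p j * z ^ ((k : ℤ) + 2 * j) + q j * z ^ (2 + 2 * (j : ℤ) - d - k))

/-- Membership in the component Hardy space `H^{2,k}(A_{a,b})`: the closure in `H²(A_{a,b})`
of the linear span of `z^{k+2j}` and `z^{-d-k+2+2j}` (`j ≥ 0`). -/
def MemH2k (a b : ℝ) (d k : ℕ) (f : ℂ → ℂ) : Prop :=
  MemH2 a b f ∧
    ∀ ε : ℝ, 0 < ε → ∃ g : ℂ → ℂ, InSpanV d k g ∧
      hardyNormSq a b (fun z => f z - g z) < ε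

/-- The unit sphere `S^{d-1}` in `ℝ^d`. -/
abbrev Sph (d : ℕ) := Metric.sphere (0 : EuclideanSpace ℝ (Fin d)) 1

/-- The rotation invariant surface measure `dθ` on the unit sphere `S^{d-1}`. -/
def sphMeasure (d : ℕ) : Measure (Sph d) :=
  (volume : Measure (EuclideanSpace ℝ (Fin d))).toSphere

/-- Evaluation of a polynomial in `d` variables at a point of the sphere `S^{d-1}`. -/
def sphEval {d : ℕ} (P : MvPolynomial (Fin d) ℝ) (θ : Sph d) : ℝ :=
  MvPolynomial.eval (fun i => (θ : EuclideanSpace ℝ (Fin d)) i) P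

/-- The (formal) Laplace operator `Δ = Σ_i ∂²/∂x_i²` on polynomials. -/
def polyLaplacian (d : ℕ) : MvPolynomial (Fin d) ℝ →ₗ[ℝ] MvPolynomial (Fin d) ℝ :=
  ∑ i : Fin d, ((MvPolynomial.pderiv i).toLinearMap).comp (MvPolynomial.pderiv i).toLinearMap

/-- The space `ℋ_k(ℝ^d)` of harmonic homogeneous polynomials of degree `k`. -/
def harmonicHomSubmodule (d k : ℕ) : Submodule ℝ (MvPolynomial (Fin d) ℝ) :=
  MvPolynomial.homogeneousSubmodule (Fin d) ℝ k ⊓ LinearMap.ker (polyLaplacian d)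

/-- An orthonormal basis `Y_{k,ℓ}`, `ℓ = 1,…,a_k`, of the spaces `ℋ_k(ℝ^d)` of harmonic
homogeneous polynomials of degree `k`, orthonormal with respect to the `L²` inner product
on the unit sphere `S^{d-1}`; `a_k = dim ℋ_k(ℝ^d)`. -/
structure SphericalONB (d : ℕ) (ak : ℕ → ℕ) where
  Y : (k : ℕ) → Fin (ak k) → MvPolynomial (Fin d) ℝ
  harmonic : ∀ k ℓ, Y k ℓ ∈ harmonicHomSubmodule d k
  orthonormal : ∀ k (ℓ ℓ' : Fin (ak k)),
    (∫ θ : Sph d, sphEval (Y k ℓ) θ * sphEval (Y k ℓ') θ ∂(sphMeasure d))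
      = if ℓ = ℓ' then 1 else 0
  ortho_of_ne : ∀ k k' (ℓ : Fin (ak k)) (ℓ' : Fin (ak k')), k ≠ k' →
    (∫ θ : Sph d, sphEval (Y k ℓ) θ * sphEval (Y k' ℓ') θ ∂(sphMeasure d)) = 0
  card_eq : ∀ k, ak k = Module.finrank ℝ (harmonicHomSubmodule d k)

/-- The squared norm `‖f‖²_{H_L²} = Σ_{k,ℓ} ‖f_{k,ℓ}‖²_{H²(A_{a,b})} L^{2k}` of an element of
the polyharmonic Hardy space, given through its family of components `F k ℓ ∈ H^{2,k}`. -/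
def HLnormSq (a b L : ℝ) (ak : ℕ → ℕ) (F : (k : ℕ) → Fin (ak k) → ℂ → ℂ) : ℝ :=
  ∑' p : Σ k : ℕ, Fin (ak k), hardyNormSq a b (F p.1 p.2) * L ^ (2 * p.1)

/-- The weighted norms are summable (i.e. `‖f‖_{H_L²} < ∞`). -/
def HLSummable (a b L : ℝ) (ak : ℕ → ℕ) (F : (k : ℕ) → Fin (ak k) → ℂ → ℂ) : Prop :=
  Summable (fun p : Σ k : ℕ, Fin (ak k) => hardyNormSq a b (F p.1 p.2) * L ^ (2 * p.1))

/-- `f(z,θ) = Σ_{k,ℓ} f_{k,ℓ}(z) Y_{k,ℓ}(θ)` on the complexified annulus `𝒜_{a,b}`. -/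
def IsHLRep (a b : ℝ) {d : ℕ} (ak : ℕ → ℕ) (B : SphericalONB d ak)
    (F : (k : ℕ) → Fin (ak k) → ℂ → ℂ) (f : ℂ → Sph d → ℂ) : Prop :=
  ∀ z ∈ cAnnulus a b, ∀ θ : Sph d,
    HasSum (fun p : Σ k : ℕ, Fin (ak k) =>
      F p.1 p.2 z * ((sphEval (B.Y p.1 p.2) θ : ℝ) : ℂ)) (f z θ)

/-- Evaluation of a polynomial in `d` variables at a point of `ℝ^d`. -/
def solidEval {d : ℕ} (P : MvPolynomial (Fin d) ℝ) (x : EuclideanSpace ℝ (Fin d)) : ℝ :=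
  MvPolynomial.eval (fun i => x i) P

lemma hardyNormSq_nonneg {a b : ℝ} (ha : 0 < a) (hb : 0 < b) (f : ℂ → ℂ) :
    0 ≤ hardyNormSq a b f := by
  unfold hardyNormSq
  refine mul_nonneg (by positivity) (tsum_nonneg fun j => ?_)
  have h1 : (0:ℝ) < a ^ (2 * j) := zpow_pos ha _
  have h2 : (0:ℝ) < b ^ (2 * j) := zpow_pos hb _
  positivity

/-- Error estimate for the polyharmonic Gauss–Jacobi cubature formula on
the annular region `A_{a,b} ⊂ ℝ^d`, for a pseudo-positive signed measure `μ = μ₁ - μ₂` and a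
function `f ∈ H_L²(𝒜_{a',b'})` with finite Laplace–Fourier expansion
`f(rθ) = Σ_{k ≤ k₀, ℓ} f_{k,ℓ}(r) Y_{k,ℓ}(θ)`. -/
theorem polyharmonic_cubature_error (a' a b b' L : ℝ)
    (ha' : 0 < a') (h1 : a' < a) (h2 : a < b) (h3 : b < b') (hL : 1 < L)
    (d N k₀ : ℕ) (hd : 2 ≤ d) (hN : 1 ≤ N)
    (ak : ℕ → ℕ) (B : SphericalONB d ak)
    -- the signed measure `μ = μ₁ - μ₂` with support in the annular region `A_{a,b}`
    (μ₁ μ₂ : Measure (EuclideanSpace ℝ (Fin d)))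
    (hμ₁ : IsFiniteMeasure μ₁) (hμ₂ : IsFiniteMeasure μ₂)
    (hsupp₁ : μ₁ {x : EuclideanSpace ℝ (Fin d) | ¬(a < ‖x‖ ∧ ‖x‖ < b)} = 0)
    (hsupp₂ : μ₂ {x : EuclideanSpace ℝ (Fin d) | ¬(a < ‖x‖ ∧ ‖x‖ < b)} = 0)
    -- pseudo-positivity of `μ` with respect to the basis `Y_{k,ℓ}`
    (hpseudo : ∀ (k : ℕ) (ℓ : Fin (ak k)) (h : ℝ → ℝ), ContinuousOn h (Set.Icc a b) →
      (∀ r ∈ Set.Icc a b, 0 ≤ h r) →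
      0 ≤ (∫ x, h ‖x‖ * solidEval (B.Y k ℓ) x ∂μ₁) -
            ∫ x, h ‖x‖ * solidEval (B.Y k ℓ) x ∂μ₂)
    -- the (nonnegative) component measures `μ_{k,ℓ}` of `μ`
    (μc : (k : ℕ) → (ℓ : Fin (ak k)) → Measure ℝ)
    (hμc : ∀ k ℓ, IsFiniteMeasure (μc k ℓ))
    (hμcsupp : ∀ k ℓ, (μc k ℓ) (Set.Icc a b)ᶜ = 0)
    (hμcdef : ∀ k ℓ (g : ℝ → ℝ), ContinuousOn g (Set.Icc a b) →
      (∫ r, g r ∂(μc k ℓ)) =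
        (∫ x, g ‖x‖ * solidEval (B.Y k ℓ) (‖x‖⁻¹ • x) ∂μ₁) -
          ∫ x, g ‖x‖ * solidEval (B.Y k ℓ) (‖x‖⁻¹ • x) ∂μ₂)
    -- the Gauss–Jacobi quadrature data: knots in `[a,b]`, nonnegative weights,
    -- exactness on `V_{k,d,2N}`
    (t : (k : ℕ) → Fin (ak k) → Fin (2 * N) → ℝ)
    (ht : ∀ k ℓ j, t k ℓ j ∈ Set.Icc a b)
    (lam : (k : ℕ) → Fin (ak k) → Fin (2 * N) → ℝ)
    (hlam : ∀ k ℓ j, 0 ≤ lam k ℓ j)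
    (hexact : ∀ k ℓ (p q : Fin (2 * N) → ℝ),
      (∫ s, (∑ j : Fin (2 * N),
          (p j * s ^ (k + 2 * (j : ℕ)) + q j * s ^ (2 + 2 * ((j : ℕ) : ℤ) - d - k)))
            ∂(μc k ℓ))
        = ∑ i : Fin (2 * N), lam k ℓ i * (∑ j : Fin (2 * N),
            (p j * (t k ℓ i) ^ (k + 2 * (j : ℕ)) +
              q j * (t k ℓ i) ^ (2 + 2 * ((j : ℕ) : ℤ) - d - k))))
    -- the component quadrature error constants `C_k`
    (C : ℕ → ℝ)
    (hC : ∀ k (ℓ : Fin (ak k)) (g : ℂ → ℂ), MemH2k a' b' d k g →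
      ‖((∫ r, g ((r : ℝ) : ℂ) ∂(μc k ℓ)) -
          ∑ j : Fin (2 * N), (lam k ℓ j : ℂ) * g ((t k ℓ j : ℝ) : ℂ))‖
        ≤ C k * Real.sqrt (hardyNormSq a' b' g))
    -- `f ∈ H_L²(𝒜_{a',b'})` with finite Laplace–Fourier expansion `Σ_{k ≤ k₀, ℓ}`
    (F : (k : ℕ) → Fin (ak k) → ℂ → ℂ)
    (hF : ∀ k ℓ, MemH2k a' b' d k (F k ℓ))
    (hfinite : ∀ k, k₀ < k → ∀ ℓ, F k ℓ = 0)
    (hnorm : HLSummable a' b' L ak F) :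
    ‖
      (((∫ x, (∑ k ∈ Finset.range (k₀ + 1), ∑ ℓ : Fin (ak k),
            F k ℓ ((‖x‖ : ℝ) : ℂ) * ((solidEval (B.Y k ℓ) (‖x‖⁻¹ • x) : ℝ) : ℂ)) ∂μ₁) -
         ∫ x, (∑ k ∈ Finset.range (k₀ + 1), ∑ ℓ : Fin (ak k),
            F k ℓ ((‖x‖ : ℝ) : ℂ) * ((solidEval (B.Y k ℓ) (‖x‖⁻¹ • x) : ℝ) : ℂ)) ∂μ₂) -
        ∑ k ∈ Finset.range (k₀ + 1), ∑ ℓ : Fin (ak k), ∑ j : Fin (2 * N),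
          (lam k ℓ j : ℂ) * F k ℓ ((t k ℓ j : ℝ) : ℂ))‖
      ≤ Real.sqrt (∑ k ∈ Finset.range (k₀ + 1), ∑ _ℓ : Fin (ak k), (C k) ^ 2 / L ^ (2 * k))
          * Real.sqrt (HLnormSq a' b' L ak F) := by
  classical
  haveI := hμ₁; haveI := hμ₂
  -- abbreviations
  set G : (k : ℕ) → Fin (ak k) → EuclideanSpace ℝ (Fin d) → ℂ := fun k ℓ x =>
    F k ℓ ((‖x‖ : ℝ) : ℂ) * ((solidEval (B.Y k ℓ) (‖x‖⁻¹ • x) : ℝ) : ℂ) with hG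
  -- the closed annular shell
  set K : Set (EuclideanSpace ℝ (Fin d)) := (fun x => ‖x‖) ⁻¹' Set.Icc a b with hK
  have hKc : IsCompact K := by
    apply Metric.isCompact_of_isClosed_isBounded
    · exact isClosed_Icc.preimage continuous_norm
    · exact isBounded_iff_forall_norm_le.2 ⟨b, fun x hx => hx.2⟩
  have hμ₁K : μ₁ Kᶜ = 0 := by
    refine measure_mono_null (fun x hx => ?_) hsupp₁
    simp only [hK, Set.mem_compl_iff, Set.mem_preimage, Set.mem_Icc] at hx
    show ¬(a < ‖x‖ ∧ ‖x‖ < b)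
    exact fun hcon => hx ⟨hcon.1.le, hcon.2.le⟩
  have hμ₂K : μ₂ Kᶜ = 0 := by
    refine measure_mono_null (fun x hx => ?_) hsupp₂
    simp only [hK, Set.mem_compl_iff, Set.mem_preimage, Set.mem_Icc] at hx
    show ¬(a < ‖x‖ ∧ ‖x‖ < b)
    exact fun hcon => hx ⟨hcon.1.le, hcon.2.le⟩
  -- continuity of the components
  have hmem : ∀ r ∈ Set.Icc a b, ((r : ℝ) : ℂ) ∈ cAnnulus a' b' := by
    intro r hr
    have h0 : (0:ℝ) < r := lt_of_lt_of_le (lt_trans ha' h1) hr.1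
    constructor
    · simpa [Complex.norm_real, abs_of_pos h0] using lt_of_lt_of_le h1 hr.1
    · simpa [Complex.norm_real, abs_of_pos h0] using lt_of_le_of_lt hr.2 h3
  have hcontF : ∀ k ℓ, ContinuousOn (fun r : ℝ => F k ℓ ((r : ℝ) : ℂ)) (Set.Icc a b) := by
    intro k ℓ
    exact ((hF k ℓ).1.1.continuousOn).comp Complex.continuous_ofReal.continuousOn hmem
  have hcontG : ∀ k ℓ, ContinuousOn (G k ℓ) K := by
    intro k ℓ
    have h1' : ContinuousOn (fun x : EuclideanSpace ℝ (Fin d) => F k ℓ ((‖x‖ : ℝ) : ℂ)) K :=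
      (hcontF k ℓ).comp continuous_norm.continuousOn (fun x hx => hx)
    have h2' : ContinuousOn
        (fun x : EuclideanSpace ℝ (Fin d) => ((solidEval (B.Y k ℓ) (‖x‖⁻¹ • x) : ℝ) : ℂ)) K := by
      apply Complex.continuous_ofReal.comp_continuousOn
      have hsm : ContinuousOn (fun x : EuclideanSpace ℝ (Fin d) => ‖x‖⁻¹ • x) K := by
        apply ContinuousOn.fun_smul _ continuous_id.continuousOn
        apply ContinuousOn.inv₀ continuous_norm.continuousOn
        intro x hx
        have : (0:ℝ) < a := lt_trans ha' h1
        exact ne_of_gt (lt_of_lt_of_le this hx.1)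
      have hev : Continuous (fun y : EuclideanSpace ℝ (Fin d) => solidEval (B.Y k ℓ) y) := by
        unfold solidEval
        exact (MvPolynomial.continuous_eval (B.Y k ℓ)).comp (continuous_pi fun i => (continuous_apply i).comp (PiLp.continuous_ofLp 2 _))
      exact hev.comp_continuousOn hsm
    exact h1'.mul h2'
  -- integrability
  have hint₁ : ∀ k ℓ, Integrable (G k ℓ) μ₁ := by
    intro k ℓ
    have h := (hcontG k ℓ).integrableOn_compact (μ := μ₁) hKc
    rwa [IntegrableOn, Measure.restrict_eq_self_of_ae_mem (s := K) (ae_iff.2 (by exact hμ₁K))] at h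
  have hint₂ : ∀ k ℓ, Integrable (G k ℓ) μ₂ := by
    intro k ℓ
    have h := (hcontG k ℓ).integrableOn_compact (μ := μ₂) hKc
    rwa [IntegrableOn, Measure.restrict_eq_self_of_ae_mem (s := K) (ae_iff.2 (by exact hμ₂K))] at h
  have hintc : ∀ k ℓ, Integrable (fun r : ℝ => F k ℓ ((r : ℝ) : ℂ)) (μc k ℓ) := by
    intro k ℓ
    haveI := hμc k ℓ
    have h := (hcontF k ℓ).integrableOn_compact (μ := μc k ℓ) isCompact_Icc
    rwa [IntegrableOn, Measure.restrict_eq_self_of_ae_mem (ae_iff.2 (hμcsupp k ℓ))] at h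
  -- key identity: integrals against μ equal component integrals
  have key : ∀ k ℓ, ((∫ x, G k ℓ x ∂μ₁) - ∫ x, G k ℓ x ∂μ₂)
      = ∫ r, F k ℓ ((r : ℝ) : ℂ) ∂(μc k ℓ) := by
    intro k ℓ
    have hre := hμcdef k ℓ (fun r => (F k ℓ ((r : ℝ) : ℂ)).re)
      ((Complex.continuous_re.comp_continuousOn (hcontF k ℓ)))
    have him := hμcdef k ℓ (fun r => (F k ℓ ((r : ℝ) : ℂ)).im)
      ((Complex.continuous_im.comp_continuousOn (hcontF k ℓ)))
    have e₁ : ∫ x, (G k ℓ x).re ∂μ₁ = (∫ x, G k ℓ x ∂μ₁).re := integral_re (hint₁ k ℓ)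
    have e₂ : ∫ x, (G k ℓ x).re ∂μ₂ = (∫ x, G k ℓ x ∂μ₂).re := integral_re (hint₂ k ℓ)
    have e₃ : ∫ r, (F k ℓ ((r : ℝ) : ℂ)).re ∂(μc k ℓ)
        = (∫ r, F k ℓ ((r : ℝ) : ℂ) ∂(μc k ℓ)).re := integral_re (hintc k ℓ)
    have f₁ : ∫ x, (G k ℓ x).im ∂μ₁ = (∫ x, G k ℓ x ∂μ₁).im := integral_im (hint₁ k ℓ)
    have f₂ : ∫ x, (G k ℓ x).im ∂μ₂ = (∫ x, G k ℓ x ∂μ₂).im := integral_im (hint₂ k ℓ)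
    have f₃ : ∫ r, (F k ℓ ((r : ℝ) : ℂ)).im ∂(μc k ℓ)
        = (∫ r, F k ℓ ((r : ℝ) : ℂ) ∂(μc k ℓ)).im := integral_im (hintc k ℓ)
    apply Complex.ext
    · rw [Complex.sub_re, ← e₁, ← e₂, ← e₃]
      simp only [hG, Complex.mul_re, Complex.ofReal_re, Complex.ofReal_im, mul_zero, sub_zero]
      exact (hre).symm
    · rw [Complex.sub_im, ← f₁, ← f₂, ← f₃]
      simp only [hG, Complex.mul_im, Complex.ofReal_re, Complex.ofReal_im, mul_zero, zero_add]
      exact (him).symm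
  -- componentwise error
  set e : (k : ℕ) → Fin (ak k) → ℂ := fun k ℓ =>
    (∫ r, F k ℓ ((r : ℝ) : ℂ) ∂(μc k ℓ)) -
      ∑ j : Fin (2 * N), (lam k ℓ j : ℂ) * F k ℓ ((t k ℓ j : ℝ) : ℂ) with he
  have hE : ((∫ x, (∑ k ∈ Finset.range (k₀ + 1), ∑ ℓ : Fin (ak k),
            F k ℓ ((‖x‖ : ℝ) : ℂ) * ((solidEval (B.Y k ℓ) (‖x‖⁻¹ • x) : ℝ) : ℂ)) ∂μ₁) -
         ∫ x, (∑ k ∈ Finset.range (k₀ + 1), ∑ ℓ : Fin (ak k),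
            F k ℓ ((‖x‖ : ℝ) : ℂ) * ((solidEval (B.Y k ℓ) (‖x‖⁻¹ • x) : ℝ) : ℂ)) ∂μ₂) -
        ∑ k ∈ Finset.range (k₀ + 1), ∑ ℓ : Fin (ak k), ∑ j : Fin (2 * N),
          (lam k ℓ j : ℂ) * F k ℓ ((t k ℓ j : ℝ) : ℂ)
      = ∑ k ∈ Finset.range (k₀ + 1), ∑ ℓ : Fin (ak k), e k ℓ := by
    have hsw₁ : (∫ x, (∑ k ∈ Finset.range (k₀ + 1), ∑ ℓ : Fin (ak k), G k ℓ x) ∂μ₁)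
        = ∑ k ∈ Finset.range (k₀ + 1), ∑ ℓ : Fin (ak k), ∫ x, G k ℓ x ∂μ₁ := by
      rw [integral_finset_sum _ (fun k _ => integrable_finset_sum _ (fun ℓ _ => hint₁ k ℓ))]
      exact Finset.sum_congr rfl fun k _ => integral_finset_sum _ (fun ℓ _ => hint₁ k ℓ)
    have hsw₂ : (∫ x, (∑ k ∈ Finset.range (k₀ + 1), ∑ ℓ : Fin (ak k), G k ℓ x) ∂μ₂)
        = ∑ k ∈ Finset.range (k₀ + 1), ∑ ℓ : Fin (ak k), ∫ x, G k ℓ x ∂μ₂ := by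
      rw [integral_finset_sum _ (fun k _ => integrable_finset_sum _ (fun ℓ _ => hint₂ k ℓ))]
      exact Finset.sum_congr rfl fun k _ => integral_finset_sum _ (fun ℓ _ => hint₂ k ℓ)
    show ((∫ x, (∑ k ∈ Finset.range (k₀ + 1), ∑ ℓ : Fin (ak k), G k ℓ x) ∂μ₁) -
         ∫ x, (∑ k ∈ Finset.range (k₀ + 1), ∑ ℓ : Fin (ak k), G k ℓ x) ∂μ₂) -
        ∑ k ∈ Finset.range (k₀ + 1), ∑ ℓ : Fin (ak k), ∑ j : Fin (2 * N),
          (lam k ℓ j : ℂ) * F k ℓ ((t k ℓ j : ℝ) : ℂ) = _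
    rw [hsw₁, hsw₂, ← Finset.sum_sub_distrib, ← Finset.sum_sub_distrib]
    refine Finset.sum_congr rfl fun k _ => ?_
    rw [← Finset.sum_sub_distrib, ← Finset.sum_sub_distrib]
    refine Finset.sum_congr rfl fun ℓ _ => ?_
    rw [key k ℓ]
  rw [hE]
  -- bound each component error via `hC`
  have habs : ‖∑ k ∈ Finset.range (k₀ + 1), ∑ ℓ : Fin (ak k), e k ℓ‖
      ≤ ∑ k ∈ Finset.range (k₀ + 1), ∑ ℓ : Fin (ak k),
          C k * Real.sqrt (hardyNormSq a' b' (F k ℓ)) := by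
    refine le_trans (norm_sum_le _ _) (Finset.sum_le_sum fun k _ => ?_)
    refine le_trans (norm_sum_le _ _) (Finset.sum_le_sum fun ℓ _ => ?_)
    exact hC k ℓ (F k ℓ) (hF k ℓ)
  have htermnn : ∀ k ℓ, 0 ≤ C k * Real.sqrt (hardyNormSq a' b' (F k ℓ)) :=
    fun k ℓ => le_trans (norm_nonneg _) (hC k ℓ (F k ℓ) (hF k ℓ))
  -- Cauchy–Schwarz
  have hL0 : (0:ℝ) < L := lt_trans one_pos hL
  have hLk : ∀ k : ℕ, (0:ℝ) < L ^ k := fun k => pow_pos hL0 k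
  have hHnn : ∀ (k : ℕ) (ℓ : Fin (ak k)), 0 ≤ hardyNormSq a' b' (F k ℓ) :=
    fun k ℓ => hardyNormSq_nonneg ha' (lt_trans (lt_trans ha' h1) (lt_trans h2 h3)) (F k ℓ)
  set s : Finset (Σ k : ℕ, Fin (ak k)) :=
    (Finset.range (k₀ + 1)).sigma (fun _ => Finset.univ) with hs
  set T : ℝ := ∑ k ∈ Finset.range (k₀ + 1), ∑ ℓ : Fin (ak k),
      C k * Real.sqrt (hardyNormSq a' b' (F k ℓ)) with hT
  have hT0 : 0 ≤ T :=
    Finset.sum_nonneg fun k _ => Finset.sum_nonneg fun ℓ _ => htermnn k ℓ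
  have hTs : T = ∑ p ∈ s, (C p.1 / L ^ p.1) *
      (Real.sqrt (hardyNormSq a' b' (F p.1 p.2)) * L ^ p.1) := by
    rw [hT, hs, Finset.sum_sigma]
    refine Finset.sum_congr rfl fun k _ => Finset.sum_congr rfl fun ℓ _ => ?_
    field_simp
  have hsq : ∀ k : ℕ, (L ^ k) ^ 2 = L ^ (2 * k) := fun k => by
    rw [← pow_mul, Nat.mul_comm]
  have hA : (∑ p ∈ s, (C p.1 / L ^ p.1) ^ 2)
      = ∑ k ∈ Finset.range (k₀ + 1), ∑ _ℓ : Fin (ak k), C k ^ 2 / L ^ (2 * k) := by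
    rw [hs, Finset.sum_sigma]
    refine Finset.sum_congr rfl fun k _ => Finset.sum_congr rfl fun ℓ _ => ?_
    rw [div_pow, hsq]
  have hB : (∑ p ∈ s, (Real.sqrt (hardyNormSq a' b' (F p.1 p.2)) * L ^ p.1) ^ 2)
      ≤ HLnormSq a' b' L ak F := by
    have heq : ∀ p : Σ k : ℕ, Fin (ak k),
        (Real.sqrt (hardyNormSq a' b' (F p.1 p.2)) * L ^ p.1) ^ 2
          = hardyNormSq a' b' (F p.1 p.2) * L ^ (2 * p.1) := by
      intro p
      rw [mul_pow, Real.sq_sqrt (hHnn p.1 p.2), hsq]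
    rw [Finset.sum_congr rfl fun p _ => heq p]
    exact Summable.sum_le_tsum s (fun p _ => mul_nonneg (hHnn p.1 p.2) (le_of_lt (by positivity))) hnorm
  have hAnn : 0 ≤ ∑ p ∈ s, (C p.1 / L ^ p.1) ^ 2 :=
    Finset.sum_nonneg fun p _ => sq_nonneg _
  have hBnn : 0 ≤ HLnormSq a' b' L ak F :=
    tsum_nonneg fun p => mul_nonneg (hHnn p.1 p.2) (le_of_lt (by positivity))
  have hCS := Finset.sum_mul_sq_le_sq_mul_sq s
    (fun p => C p.1 / L ^ p.1)
    (fun p => Real.sqrt (hardyNormSq a' b' (F p.1 p.2)) * L ^ p.1)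
  have hT2 : T ^ 2 ≤ (∑ p ∈ s, (C p.1 / L ^ p.1) ^ 2) * HLnormSq a' b' L ak F := by
    rw [hTs]
    exact le_trans hCS (mul_le_mul_of_nonneg_left hB hAnn)
  have hfin : T ≤ Real.sqrt (∑ p ∈ s, (C p.1 / L ^ p.1) ^ 2)
      * Real.sqrt (HLnormSq a' b' L ak F) := by
    rw [← Real.sqrt_mul hAnn]
    calc T = Real.sqrt (T ^ 2) := (Real.sqrt_sq hT0).symm
      _ ≤ _ := Real.sqrt_le_sqrt hT2
  rw [← hA]
  exact le_trans habs hfin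
end
end
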